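/- arXiv:1204.4033 — 7 statements merged into one kernel-verified Lean document; each statement's English description precedes it below -/
import Mathlib

section
/- With q̂ = q^(p-1) for q a primitive root mod p^2, define c_k(u,v) = ∏_{i=0}^{k-1} (v − q̂^i u)/(q̂^k − q̂^i) in ℚ_p[u,v] and f_k = p^(ν_p(k!)) · c_k. Then f_k lies in the subring ℤ_p[u/p, v/p] of ℚ_p[u,v]. -/
open MvPolynomial

section Aux

variable {p : ℕ} [hp : Fact p.Prime]

lemma my_val_inv (x : ℚ_[p]) (hx : x ≠ 0) : (x⁻¹).valuation = -x.valuation := by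
  have h : (x * x⁻¹).valuation = 0 := by rw [mul_inv_cancel₀ hx]; simp
  rw [Padic.valuation_mul hx (inv_ne_zero hx)] at h
  linarith

lemma my_val_prod {ι : Type*} (s : Finset ι) (f : ι → ℚ_[p]) (hf : ∀ i ∈ s, f i ≠ 0) :
    (∏ i ∈ s, f i).valuation = ∑ i ∈ s, (f i).valuation := by
  classical
  induction s using Finset.induction_on with
  | empty => simp
  | @insert a s hx ih =>
    rw [Finset.prod_insert hx, Finset.sum_insert hx,
      Padic.valuation_mul (hf a (Finset.mem_insert_self a s))
        (Finset.prod_ne_zero_iff.mpr fun i hi => hf i (Finset.mem_insert_of_mem hi)),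
      ih (fun i hi => hf i (Finset.mem_insert_of_mem hi))]

lemma my_padicValInt_eq {z : ℤ} {n : ℕ} (hz : z ≠ 0) (h1 : (p : ℤ) ^ n ∣ z)
    (h2 : ¬(p : ℤ) ^ (n + 1) ∣ z) : padicValInt p z = n := by
  have hle : n ≤ padicValInt p z := ((padicValInt_dvd_iff n z).mp h1).resolve_left hz
  have hge : ¬(n + 1 ≤ padicValInt p z) := fun h =>
    h2 ((padicValInt_dvd_iff (n + 1) z).mpr (Or.inr h))
  omega

lemma my_sum_fact (k : ℕ) :
    ∑ j ∈ Finset.range k, padicValNat p (j + 1) = padicValNat p k.factorial := by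
  induction k with
  | zero => simp
  | succ k ih =>
    rw [Finset.sum_range_succ, ih, Nat.factorial_succ,
      padicValNat.mul (Nat.succ_ne_zero k) (Nat.factorial_ne_zero k), Nat.add_comm]

end Aux

/-- The polynomial `c_k(u,v) = ∏_{i=0}^{k-1} (v − q̂^i u)/(q̂^k − q̂^i)` in `ℚ_p[u,v]`,
with `u = X 0`, `v = X 1` and `q̂ = q^(p-1)`. -/
noncomputable def cpoly (p : ℕ) [Fact p.Prime] (q : ℤ) (k : ℕ) :
    MvPolynomial (Fin 2) ℚ_[p] :=
  ∏ i ∈ Finset.range k,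
    (C ((((q : ℚ_[p]) ^ (p - 1)) ^ k - ((q : ℚ_[p]) ^ (p - 1)) ^ i)⁻¹) *
      (X 1 - C (((q : ℚ_[p]) ^ (p - 1)) ^ i) * X 0))

/-- `f_k = p^(ν_p(k!)) · c_k`. -/
noncomputable def fpoly (p : ℕ) [Fact p.Prime] (q : ℤ) (k : ℕ) :
    MvPolynomial (Fin 2) ℚ_[p] :=
  C ((p : ℚ_[p]) ^ (padicValNat p (Nat.factorial k))) * cpoly p q k

/-- `f_k` lies in the subring `ℤ_p[u/p, v/p]` of `ℚ_p[u,v]`, i.e. the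
coefficient of `u^a v^b` in `f_k` has `p`-adic valuation at least `−(a+b)`. -/
theorem stmt1 (p : ℕ) [Fact p.Prime] (hodd : Odd p) (q : ℤ)
    (hq : orderOf ((q : ZMod (p ^ 2))) = p * (p - 1)) (k : ℕ) :
    ∀ m : Fin 2 →₀ ℕ,
      -((m 0 : ℤ) + (m 1 : ℤ)) ≤ ((fpoly p q k).coeff m).valuation := by
  intro m
  have hp := (Fact.out : p.Prime)
  have hp3 : 3 ≤ p := by
    have := hp.two_le
    rcases hodd with ⟨t, ht⟩; omega
  haveI : Fact (1 < p ^ 2) := ⟨by nlinarith⟩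
  set Q : ℤ := q ^ (p - 1) with hQdef
  -- basic facts about q and Q
  have hord : ((q : ZMod (p ^ 2))) ^ (p * (p - 1)) = 1 := by
    rw [← hq]; exact pow_orderOf_eq_one _
  have hpq : ¬ (p : ℤ) ∣ q := by
    rintro ⟨t, ht⟩
    have h2 : ((q : ZMod (p ^ 2))) ^ 2 = 0 := by
      have hd : ((p : ℤ) ^ 2 : ℤ) ∣ q ^ 2 := ⟨t ^ 2, by rw [ht]; ring⟩
      have h := (ZMod.intCast_zmod_eq_zero_iff_dvd (q ^ 2) (p ^ 2)).mpr (by exact_mod_cast hd)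
      push_cast at h ⊢
      exact h
    have h0 : ((q : ZMod (p ^ 2))) ^ (p * (p - 1)) = 0 := by
      have hge : 2 ≤ p * (p - 1) :=
        le_trans (show 2 ≤ 3 * 2 by norm_num) (Nat.mul_le_mul hp3 (show 2 ≤ p - 1 by omega))
      calc ((q : ZMod (p ^ 2))) ^ (p * (p - 1))
          = ((q : ZMod (p ^ 2))) ^ 2 * ((q : ZMod (p ^ 2))) ^ (p * (p - 1) - 2) := by
            rw [← pow_add]; congr 1; omega
        _ = 0 := by rw [h2, zero_mul]
    rw [hord] at h0
    exact one_ne_zero h0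
  have hq0 : q ≠ 0 := by
    rintro rfl
    exact hpq (dvd_zero _)
  have hQcast : ((Q : ZMod (p ^ 2))) = ((q : ZMod (p ^ 2))) ^ (p - 1) := by
    push_cast [hQdef]; ring
  -- Q ≡ 1 mod p
  have hQp : ((Q : ZMod p)) = 1 := by
    have h1 : ((Q : ZMod (p ^ 2))) ^ p = 1 := by
      rw [hQcast, ← pow_mul, Nat.mul_comm, hord]
    have h2 : ((Q : ZMod p)) ^ p = 1 := by
      have h := congrArg (ZMod.castHom (dvd_pow_self p two_ne_zero) (ZMod p)) h1
      rwa [map_pow, map_intCast, map_one] at h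
    calc ((Q : ZMod p)) = ((Q : ZMod p)) ^ p := (ZMod.pow_card _).symm
      _ = 1 := h2
  have hdvd : (p : ℤ) ∣ Q - 1 := by
    have h : ((Q - 1 : ℤ) : ZMod p) = 0 := by push_cast [hQp]; ring
    exact_mod_cast (ZMod.intCast_zmod_eq_zero_iff_dvd (Q - 1) p).mp h
  -- Q ≢ 1 mod p^2
  have hQp2 : ((Q : ZMod (p ^ 2))) ≠ 1 := by
    intro h
    have h1 : ((q : ZMod (p ^ 2))) ^ (p - 1) = 1 := by rw [← hQcast, h]
    have hdvd' := orderOf_dvd_of_pow_eq_one h1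
    rw [hq] at hdvd'
    have hle := Nat.le_of_dvd (by omega) hdvd'
    have hmul : 3 * (p - 1) ≤ p * (p - 1) := Nat.mul_le_mul_right _ hp3
    have : 2 ≤ p - 1 := by omega
    linarith
  have hndvd2 : ¬ (p : ℤ) ^ 2 ∣ Q - 1 := by
    intro h
    apply hQp2
    have h0 : ((Q - 1 : ℤ) : ZMod (p ^ 2)) = 0 := by
      rw [ZMod.intCast_zmod_eq_zero_iff_dvd]
      exact_mod_cast h
    push_cast at h0
    linear_combination h0
  have hndvdQ : ¬ (p : ℤ) ∣ Q := fun h => hpq ((Nat.prime_iff_prime_int.mp hp).dvd_of_dvd_pow h)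
  have hQ2 : 2 ≤ Q := by
    have hev : Even (p - 1) := by
      rcases hodd with ⟨t, ht⟩; exact ⟨t, by omega⟩
    have h0 : 0 < Q := hev.pow_pos hq0
    have h1 : Q ≠ 1 := by
      intro h
      exact hQp2 (by rw [h]; simp)
    omega
  -- Lifting the exponent
  have key : ∀ j : ℕ, 0 < j → padicValInt p (Q ^ j - 1) = 1 + padicValNat p j := by
    intro j hj
    have hne : Q ^ j - 1 ≠ 0 := by
      have : 1 < Q ^ j := one_lt_pow₀ (by omega) (by omega)
      omega
    have h1 : emultiplicity ((p : ℤ)) (Q - 1) = (1 : ℕ) := by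
      rw [emultiplicity_eq_coe]
      constructor
      · simpa using hdvd
      · simpa using hndvd2
    have h2 : emultiplicity p j = ((padicValNat p j : ℕ) : ℕ∞) :=
      (padicValNat_eq_emultiplicity hj.ne').symm
    have h3 := Int.emultiplicity_pow_sub_pow hp hodd (by simpa using hdvd) hndvdQ j
    rw [one_pow, h1, h2] at h3
    have h4 : emultiplicity ((p : ℤ)) (Q ^ j - 1) = ((1 + padicValNat p j : ℕ) : ℕ∞) := by
      rw [h3]; push_cast; rfl
    obtain ⟨hd, hnd⟩ := emultiplicity_eq_coe.mp h4
    exact my_padicValInt_eq hne hd hnd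
  -- valuation of the denominators
  have hQlt : ∀ i ∈ Finset.range k, Q ^ k - Q ^ i ≠ 0 := by
    intro i hi
    rw [Finset.mem_range] at hi
    have : Q ^ i < Q ^ k := pow_lt_pow_right₀ (by omega) hi
    omega
  have hfac : ∀ i ∈ Finset.range k, padicValInt p (Q ^ k - Q ^ i) = 1 + padicValNat p (k - i) := by
    intro i hi
    rw [Finset.mem_range] at hi
    have hQi : Q ^ i ≠ 0 := pow_ne_zero _ (by omega)
    have hsplit : Q ^ k - Q ^ i = Q ^ i * (Q ^ (k - i) - 1) := by
      rw [mul_sub, mul_one, ← pow_add]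
      congr 2
      omega
    have hne2 : Q ^ (k - i) - 1 ≠ 0 := by
      have : 1 < Q ^ (k - i) := one_lt_pow₀ (by omega) (by omega)
      omega
    rw [hsplit, padicValInt.mul hQi hne2,
      padicValInt.eq_zero_of_not_dvd (fun h => hndvdQ ((Nat.prime_iff_prime_int.mp hp).dvd_of_dvd_pow h)),
      key (k - i) (by omega)]
    omega
  -- rewrite fpoly
  set ν : ℕ := padicValNat p (Nat.factorial k) with hν
  set Np : MvPolynomial (Fin 2) ℤ := ∏ i ∈ Finset.range k, (X 1 - C (Q ^ i) * X 0) with hNp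
  set γ : ℚ_[p] := (p : ℚ_[p]) ^ ν * ∏ i ∈ Finset.range k, (((Q ^ k - Q ^ i : ℤ) : ℚ_[p]))⁻¹
    with hγ
  have hcast : ((q : ℚ_[p]) ^ (p - 1)) = ((Q : ℤ) : ℚ_[p]) := by push_cast [hQdef]; ring
  have hecast : ∀ i : ℕ,
      (((q : ℚ_[p]) ^ (p - 1)) ^ k - ((q : ℚ_[p]) ^ (p - 1)) ^ i) = ((Q ^ k - Q ^ i : ℤ) : ℚ_[p]) := by
    intro i; rw [hcast]; push_cast; ring
  have hecast0 : ∀ i ∈ Finset.range k, (((Q ^ k - Q ^ i : ℤ) : ℚ_[p])) ≠ 0 := fun i hi =>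
    Int.cast_ne_zero.mpr (hQlt i hi)
  have h1 : map (Int.castRingHom ℚ_[p]) Np
      = ∏ i ∈ Finset.range k, (X 1 - C (((q : ℚ_[p]) ^ (p - 1)) ^ i) * X 0) := by
    rw [hNp, map_prod]
    refine Finset.prod_congr rfl fun i _ => ?_
    rw [map_sub, map_mul, MvPolynomial.map_X, MvPolynomial.map_X, MvPolynomial.map_C,
      eq_intCast (Int.castRingHom ℚ_[p]), Int.cast_pow, hcast]
  have hfp : fpoly p q k = C γ * map (Int.castRingHom ℚ_[p]) Np := by
    unfold fpoly cpoly
    rw [Finset.prod_mul_distrib, h1, hγ]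
    simp only [hecast]
    rw [map_mul (C : ℚ_[p] →+* MvPolynomial (Fin 2) ℚ_[p]),
      map_prod (C : ℚ_[p] →+* MvPolynomial (Fin 2) ℚ_[p]), ← hν]
    ring
  rw [hfp, coeff_C_mul, coeff_map]
  by_cases hz0 : coeff m Np = 0
  · rw [hz0]
    simp only [map_zero, mul_zero, Padic.valuation_zero]
    have h0 : (0 : ℤ) ≤ (m 0 : ℤ) + (m 1 : ℤ) := by positivity
    linarith
  · -- nonzero coefficient
    have hγ0 : γ ≠ 0 := by
      rw [hγ]
      apply mul_ne_zero
      · exact pow_ne_zero _ (Nat.cast_ne_zero.mpr hp.ne_zero)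
      · exact Finset.prod_ne_zero_iff.mpr fun i hi => inv_ne_zero (hecast0 i hi)
    have hzc : ((Int.castRingHom ℚ_[p]) (coeff m Np)) ≠ 0 := by
      simpa using (Int.cast_ne_zero.mpr hz0 : ((coeff m Np : ℤ) : ℚ_[p]) ≠ 0)
    rw [Padic.valuation_mul hγ0 hzc]
    -- valuation of the integer coefficient is nonnegative
    have hvz : 0 ≤ ((Int.castRingHom ℚ_[p]) (coeff m Np)).valuation := by
      rw [eq_intCast (Int.castRingHom ℚ_[p]), Padic.valuation_intCast]
      exact Int.natCast_nonneg _
    -- valuation of γ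
    have hsum : ∑ i ∈ Finset.range k, (1 + padicValNat p (k - i)) = k + ν := by
      rw [Finset.sum_add_distrib, Finset.sum_const, Finset.card_range, smul_eq_mul, mul_one, hν,
        ← my_sum_fact k]
      congr 1
      rw [← Finset.sum_range_reflect (fun j => padicValNat p (j + 1)) k]
      exact Finset.sum_congr rfl fun i hi => by
        rw [Finset.mem_range] at hi
        congr 1
        omega
    have hvγ : γ.valuation = -(k : ℤ) := by
      rw [hγ, Padic.valuation_mul (pow_ne_zero _ (Nat.cast_ne_zero.mpr hp.ne_zero))
        (Finset.prod_ne_zero_iff.mpr fun i hi => inv_ne_zero (hecast0 i hi))]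
      have hv1 : ((p : ℚ_[p]) ^ ν).valuation = (ν : ℤ) := by
        have : ((p : ℚ_[p]) ^ ν) = (((p ^ ν : ℕ) : ℚ_[p])) := by push_cast; ring
        rw [this, Padic.valuation_natCast, padicValNat.prime_pow]
      have hv2 : (∏ i ∈ Finset.range k, (((Q ^ k - Q ^ i : ℤ) : ℚ_[p]))⁻¹).valuation
          = -((k : ℤ) + (ν : ℤ)) := by
        rw [my_val_prod _ _ (fun i hi => inv_ne_zero (hecast0 i hi))]
        have : ∀ i ∈ Finset.range k,
            ((((Q ^ k - Q ^ i : ℤ) : ℚ_[p]))⁻¹).valuation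
              = -((1 + padicValNat p (k - i) : ℕ) : ℤ) := by
          intro i hi
          rw [my_val_inv _ (hecast0 i hi), Padic.valuation_intCast, hfac i hi]
        rw [Finset.sum_congr rfl this, Finset.sum_neg_distrib, ← Nat.cast_sum, hsum]
        push_cast
        ring
      rw [hv1, hv2]
      ring
    rw [hvγ]
    -- homogeneity gives the degree
    have hhom : Np.IsHomogeneous k := by
      have h := IsHomogeneous.prod (Finset.range k)
        (fun i => (X 1 - C (Q ^ i) * X 0 : MvPolynomial (Fin 2) ℤ))
        (fun _ => 1) (fun i _ => (isHomogeneous_X _ _).sub (isHomogeneous_C_mul_X _ _))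
      rw [Finset.sum_const, Finset.card_range, smul_eq_mul, mul_one] at h
      exact hNp ▸ h
    have hdeg : m 0 + m 1 = k := by
      by_contra hne
      apply hz0
      apply hhom.coeff_eq_zero
      have hd : m.degree = m 0 + m 1 := by
        rw [Finsupp.degree_apply]
        rw [Finset.sum_subset (Finset.subset_univ m.support)
          (fun i _ hi => Finsupp.notMem_support_iff.mp hi)]
        exact Fin.sum_univ_two m
      rw [hd]
      exact hne
    have : ((m 0 : ℤ) + (m 1 : ℤ)) = (k : ℤ) := by exact_mod_cast hdeg
    linarith
end

section
/- Let f_k = p^(ν_p(k!)) ∏_{i=0}^{k-1} (v − q̂^i u)/(q̂^k − q̂^i) and let Ψ be the ℚ_p-algebra endomorphism of ℚ_p[u,v] with Ψ(u) = u, Ψ(v) = q̂v. Then for m ≥ 1, Ψ(f_m) = q̂^m f_m + p^(ν_p(m)) u f_{m-1}. -/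
open MvPolynomial

/-- The `ℚ_p`-algebra endomorphism `Ψ` of `ℚ_p[u,v]` with `Ψ(u) = u`, `Ψ(v) = q̂·v`. -/
noncomputable def PsiMap (p : ℕ) [Fact p.Prime] (q : ℤ) :
    MvPolynomial (Fin 2) ℚ_[p] →ₐ[ℚ_[p]] MvPolynomial (Fin 2) ℚ_[p] :=
  MvPolynomial.aeval (fun i : Fin 2 =>
    if i = 0 then X 0 else C ((q : ℚ_[p]) ^ (p - 1)) * X 1)

namespace Stmt3Aux

open Finset

variable (p : ℕ) [Fact p.Prime] (q : ℤ)

noncomputable def Npoly (k : ℕ) : MvPolynomial (Fin 2) ℚ_[p] :=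
  ∏ i ∈ range k, (X 1 - C (((q : ℚ_[p]) ^ (p - 1)) ^ i) * X 0)

noncomputable def Dscal (k : ℕ) : ℚ_[p] :=
  ∏ i ∈ range k, (((q : ℚ_[p]) ^ (p - 1)) ^ k - ((q : ℚ_[p]) ^ (p - 1)) ^ i)

lemma cpoly_eq (k : ℕ) : cpoly p q k = C (Dscal p q k)⁻¹ * Npoly p q k := by
  rw [cpoly, Npoly, Dscal, Finset.prod_mul_distrib, ← Finset.prod_inv_distrib, map_prod]

variable {p q}

lemma qhat_ne_zero (hq : orderOf ((q : ZMod (p ^ 2))) = p * (p - 1)) :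
    ((q : ℚ_[p]) ^ (p - 1)) ≠ 0 := by
  have hp := (Fact.out : p.Prime)
  haveI : Fact (1 < p ^ 2) := ⟨by nlinarith [hp.two_le]⟩
  have hqz : q ≠ 0 := by
    rintro rfl
    have h := pow_orderOf_eq_one ((0 : ℤ) : ZMod (p ^ 2))
    rw [hq] at h
    have h0 : ((0 : ℤ) : ZMod (p ^ 2)) = 0 := by push_cast; rfl
    rw [h0, zero_pow (by have := hp.two_le; exact Nat.mul_ne_zero (by omega) (by omega))] at h
    exact zero_ne_one h
  exact pow_ne_zero _ (by exact_mod_cast hqz)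

lemma qhat_pow_ne_one (hodd : Odd p)
    (hq : orderOf ((q : ZMod (p ^ 2))) = p * (p - 1)) {j : ℕ} (hj : 1 ≤ j) :
    ((q : ℚ_[p]) ^ (p - 1)) ^ j ≠ 1 := by
  have hp := (Fact.out : p.Prime)
  have hp2 : p ≠ 2 := by rintro rfl; rw [Nat.odd_iff] at hodd; omega
  have hp3 : 3 ≤ p := by have := hp.two_le; omega
  intro h
  rw [← pow_mul] at h
  have hn : (p - 1) * j ≠ 0 := by
    have : 1 ≤ p - 1 := by omega
    positivity
  have hqZ : q ^ ((p - 1) * j) = 1 := by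
    have : ((q ^ ((p - 1) * j) : ℤ) : ℚ_[p]) = ((1 : ℤ) : ℚ_[p]) := by push_cast; simpa using h
    exact_mod_cast this
  have hu : IsUnit q := IsUnit.of_mul_eq_one (q ^ ((p - 1) * j - 1)) (by
    rw [← pow_succ', show (p - 1) * j - 1 + 1 = (p - 1) * j from by omega, hqZ])
  haveI : Fact (1 < p ^ 2) := ⟨by nlinarith⟩
  rcases Int.isUnit_iff.mp hu with rfl | rfl
  · rw [Int.cast_one, orderOf_one] at hq
    have h1 : 2 ≤ p - 1 := by omega
    nlinarith
  · have h2 : ((-1 : ℤ) : ZMod (p ^ 2)) ^ 2 = 1 := by push_cast; ring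
    have hd := orderOf_dvd_of_pow_eq_one h2
    rw [hq] at hd
    have := Nat.le_of_dvd (by norm_num) hd
    have h1 : 2 ≤ p - 1 := by omega
    nlinarith

lemma Dscal_ne_zero (hodd : Odd p)
    (hq : orderOf ((q : ZMod (p ^ 2))) = p * (p - 1)) (k : ℕ) : Dscal p q k ≠ 0 := by
  rw [Dscal]
  apply Finset.prod_ne_zero_iff.mpr
  intro i hi
  rw [Finset.mem_range] at hi
  rw [sub_ne_zero]
  intro h
  have h0 := qhat_ne_zero hq
  have h2 : ((q : ℚ_[p]) ^ (p - 1)) ^ i * ((q : ℚ_[p]) ^ (p - 1)) ^ (k - i)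
      = ((q : ℚ_[p]) ^ (p - 1)) ^ i * 1 := by
    rw [mul_one, ← pow_add, show i + (k - i) = k by omega, h]
  exact qhat_pow_ne_one hodd hq (by omega)
    (mul_left_cancel₀ (pow_ne_zero i h0) h2)

lemma Dscal_succ (m : ℕ) :
    Dscal p q (m + 1) =
      ((q : ℚ_[p]) ^ (p - 1)) ^ m * (((q : ℚ_[p]) ^ (p - 1)) ^ (m + 1) - 1) * Dscal p q m := by
  set k := ((q : ℚ_[p]) ^ (p - 1)) with hk
  rw [Dscal, Finset.prod_range_succ', Dscal]
  have h1 : ∀ i, k ^ (m + 1) - k ^ (i + 1) = k * (k ^ m - k ^ i) := by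
    intro i; ring
  simp_rw [← hk, h1]
  rw [Finset.prod_mul_distrib, Finset.prod_const, Finset.card_range, pow_zero]
  ring

lemma psi_Npoly (m : ℕ) :
    PsiMap p q (Npoly p q (m + 1)) =
      C (((q : ℚ_[p]) ^ (p - 1)) ^ (m + 1)) * Npoly p q (m + 1) +
        C (((q : ℚ_[p]) ^ (p - 1)) ^ m * (((q : ℚ_[p]) ^ (p - 1)) ^ (m + 1) - 1)) *
          X 0 * Npoly p q m := by
  set k := ((q : ℚ_[p]) ^ (p - 1)) with hk
  have hfac : ∀ b : ℚ_[p], PsiMap p q (X 1 - C b * X 0) = C k * X 1 - C b * X 0 := by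
    intro b; simp [PsiMap, hk]
  have h1 : ∀ i : ℕ, C k * X 1 - C (k ^ (i + 1)) * (X 0 : MvPolynomial (Fin 2) ℚ_[p])
      = C k * (X 1 - C (k ^ i) * X 0) := by
    intro i
    rw [pow_succ, C_mul, mul_comm (C (k ^ i)) (C k)]
    ring
  have hN : Npoly p q (m + 1) = Npoly p q m * (X 1 - C (k ^ m) * X 0) := by
    rw [Npoly, Finset.prod_range_succ, Npoly]
  calc PsiMap p q (Npoly p q (m + 1))
      = ∏ i ∈ range (m + 1), (C k * X 1 - C (k ^ i) * X 0) := by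
        rw [Npoly, map_prod]; exact Finset.prod_congr rfl fun i _ => hfac _
    _ = (∏ i ∈ range m, (C k * X 1 - C (k ^ (i + 1)) * X 0)) *
          (C k * X 1 - C (k ^ 0) * X 0) := Finset.prod_range_succ' _ _
    _ = (C k ^ m * Npoly p q m) *
          (C k * (X 1 - C (k ^ m) * X 0) + C (k ^ (m + 1) - 1) * X 0) := by
        congr 1
        · simp_rw [h1]
          rw [Finset.prod_mul_distrib, Finset.prod_const, Finset.card_range, Npoly]
        · simp only [pow_zero, C_1, one_mul, C_sub, C_pow, pow_succ, C_mul]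
          ring
    _ = C (k ^ (m + 1)) * Npoly p q (m + 1) +
          C (k ^ m * (k ^ (m + 1) - 1)) * X 0 * Npoly p q m := by
        rw [hN]
        simp only [C_mul, C_pow]
        ring

lemma psi_cpoly (hodd : Odd p)
    (hq : orderOf ((q : ZMod (p ^ 2))) = p * (p - 1)) (m : ℕ) (hm : 1 ≤ m) :
    PsiMap p q (cpoly p q m) =
      C (((q : ℚ_[p]) ^ (p - 1)) ^ m) * cpoly p q m + X 0 * cpoly p q (m - 1) := by
  obtain ⟨m', rfl⟩ : ∃ m', m = m' + 1 := ⟨m - 1, by omega⟩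
  rw [cpoly_eq, map_mul, psi_Npoly]
  have hC : PsiMap p q (C (Dscal p q (m' + 1))⁻¹) = C (Dscal p q (m' + 1))⁻¹ := by
    simp [PsiMap, algHom_C]
  rw [hC, Nat.add_sub_cancel, cpoly_eq]
  have key : (Dscal p q m')⁻¹ = (Dscal p q (m' + 1))⁻¹ *
      (((q : ℚ_[p]) ^ (p - 1)) ^ m' * (((q : ℚ_[p]) ^ (p - 1)) ^ (m' + 1) - 1)) := by
    rw [Dscal_succ]
    have h0 : ((q : ℚ_[p]) ^ (p - 1)) ≠ 0 := qhat_ne_zero hq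
    have h1 : ((q : ℚ_[p]) ^ (p - 1)) ^ (m' + 1) - 1 ≠ 0 :=
      sub_ne_zero.mpr (qhat_pow_ne_one hodd hq (by omega))
    have hD := Dscal_ne_zero hodd hq (p := p) (q := q) m'
    field_simp
  rw [key]
  simp only [C_mul]
  ring

end Stmt3Aux

/-- for `m ≥ 1`, `Ψ(f_m) = q̂^m f_m + p^(ν_p(m)) u f_{m-1}`. -/
theorem stmt3 (p : ℕ) [Fact p.Prime] (hodd : Odd p) (q : ℤ)
    (hq : orderOf ((q : ZMod (p ^ 2))) = p * (p - 1)) (m : ℕ) (hm : 1 ≤ m) :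
    PsiMap p q (fpoly p q m) =
      C (((q : ℚ_[p]) ^ (p - 1)) ^ m) * fpoly p q m +
        C ((p : ℚ_[p]) ^ (padicValNat p m)) * X 0 * fpoly p q (m - 1) := by
  have hval : padicValNat p (Nat.factorial m)
      = padicValNat p m + padicValNat p (Nat.factorial (m - 1)) := by
    obtain ⟨m', rfl⟩ : ∃ m', m = m' + 1 := ⟨m - 1, by omega⟩
    rw [Nat.add_sub_cancel, Nat.factorial_succ,
      padicValNat.mul (by omega) (Nat.factorial_ne_zero m')]
  rw [fpoly, map_mul]
  have hC : PsiMap p q (C ((p : ℚ_[p]) ^ (padicValNat p (Nat.factorial m))))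
      = C ((p : ℚ_[p]) ^ (padicValNat p (Nat.factorial m))) := by
    simp [PsiMap, algHom_C]
  rw [hC, Stmt3Aux.psi_cpoly hodd hq m hm, fpoly, hval, pow_add, C_mul]
  ring
end

section
/- Let f be a homogeneous polynomial in ℚ_p[u,v] such that f(kt, lt) ∈ ℤ_p[t] for all k, l ∈ 1 + pℤ_p. Then f is a ℤ_p[u]-linear combination of the polynomials c_k(u,v) = ∏_{i=0}^{k-1} (v − q̂^i u)/(q̂^k − q̂^i). -/
open MvPolynomial

namespace Stmt4Aux

open Finset

section Arith

variable {p : ℕ} [hp : Fact p.Prime] (hodd : Odd p) {q : ℤ}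
  (hq : orderOf ((q : ZMod (p ^ 2))) = p * (p - 1))

include hq in
theorem hqnd : ¬ (p:ℤ) ∣ q := by
  intro ⟨c, hc⟩
  have h2 : (2:ℕ) ≤ p * (p - 1) := by
    have := hp.out.two_le
    nlinarith [Nat.sub_le p 1, Nat.le_sub_one_of_lt (lt_of_lt_of_le one_lt_two this)]
  have h1 : ((q : ZMod (p ^ 2)))^(p * (p-1)) = 1 := by rw [← hq]; exact pow_orderOf_eq_one _
  have hz : ((q : ZMod (p ^ 2)))^2 = 0 := by
    have : ((q:ℤ)^2 : ZMod (p^2)) = 0 := by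
      rw [hc]
      push_cast
      rw [mul_pow]
      rw [show ((p:ZMod (p^2))^2 = 0) from ?_, zero_mul]
      · have : (((p^2 : ℕ) : ZMod (p^2)) : ZMod (p^2)) = 0 := ZMod.natCast_self _
        push_cast at this ⊢
        exact this
    exact_mod_cast this
  have : (1 : ZMod (p^2)) = 0 := by
    rw [← h1, show p * (p-1) = 2 + (p * (p-1) - 2) by omega, pow_add, hz, zero_mul]
  have hne : (1 : ZMod (p^2)) ≠ 0 := by
    haveI : NeZero (p^2) := ⟨pow_ne_zero 2 hp.out.ne_zero⟩
    haveI : Fact (1 < p^2) := ⟨one_lt_pow₀ hp.out.one_lt (by norm_num)⟩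
    exact one_ne_zero
  exact hne this

include hq in
theorem hA1 : (p:ℤ) ∣ q^(p-1) - 1 := by
  have h0 : ((q : ZMod p)) ≠ 0 := by
    rw [Ne, ZMod.intCast_zmod_eq_zero_iff_dvd]
    exact hqnd hq
  have := ZMod.pow_card_sub_one_eq_one h0
  rw [← ZMod.intCast_zmod_eq_zero_iff_dvd]
  push_cast
  rw [this, sub_self]

include hq in
theorem hA2 : ¬ ((p:ℤ)^2 ∣ q^(p-1) - 1) := by
  intro h
  have : ((q : ZMod (p^2)))^(p-1) = 1 := by
    have : (((q^(p-1) - 1 : ℤ)) : ZMod (p^2)) = 0 := by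
      rw [ZMod.intCast_zmod_eq_zero_iff_dvd]
      exact_mod_cast h
    push_cast at this
    linear_combination this
  have hd : orderOf ((q : ZMod (p ^ 2))) ∣ p - 1 := orderOf_dvd_of_pow_eq_one this
  rw [hq] at hd
  have hple : p * (p-1) ≤ p - 1 := Nat.le_of_dvd (by have := hp.out.two_le; omega) hd
  have h2 := hp.out.two_le
  have h3 : 1 ≤ p - 1 := by omega
  nlinarith

end Arith

section Analytic

variable {p : ℕ} [hp : Fact p.Prime] (hodd : Odd p)
  {a : ℕ} (ha2 : 1 < a) (hpa : ¬ p ∣ a) (hv1 : padicValNat p (a - 1) = 1)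

include hodd hpa hv1 ha2 in
theorem vm {m : ℕ} (hm : m ≠ 0) : padicValNat p (a ^ m - 1) = 1 + padicValNat p m := by
  have := padicValNat.pow_sub_pow (p := p) hodd (x := a) (y := 1) ha2 (by
    have h := pow_padicValNat_dvd (p := p) (n := a - 1)
    rw [hv1, pow_one] at h
    simpa using h) hpa hm
  simpa [hv1] using this

theorem norm_nat_cast_eq {n : ℕ} (hn : n ≠ 0) :
    ‖((n : ℕ) : ℚ_[p])‖ = (p : ℝ) ^ (-(padicValNat p n : ℤ)) := by
  rw [Padic.norm_eq_zpow_neg_valuation (by exact_mod_cast hn), Padic.valuation_natCast]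

include hodd hpa hv1 ha2 in
theorem norm_pow_sub_one {m : ℕ} (hm : m ≠ 0) :
    ‖((a ^ m - 1 : ℕ) : ℚ_[p])‖ = (p : ℝ)⁻¹ * ‖((m : ℕ) : ℚ_[p])‖ := by
  have h1 : a ^ m - 1 ≠ 0 := by
    have : 1 < a ^ m := one_lt_pow₀ ha2 hm
    omega
  rw [norm_nat_cast_eq h1, norm_nat_cast_eq hm, vm hodd ha2 hpa hv1 hm]
  have hp0 : (p : ℝ) ≠ 0 := by exact_mod_cast hp.out.ne_zero
  push_cast
  rw [neg_add, zpow_add₀ hp0]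
  norm_num

omit ha2 in
theorem norm_a_eq_one (hpa : ¬ p ∣ a) : ‖((a : ℕ) : ℚ_[p])‖ = 1 := by
  have hle : ‖((a : ℕ) : ℚ_[p])‖ ≤ 1 := by
    have := Padic.norm_int_le_one (p := p) (a : ℤ)
    simpa using this
  have hlt : ¬ ‖((a : ℕ) : ℚ_[p])‖ < 1 := by
    intro h
    have : (p : ℤ) ∣ (a : ℤ) := by
      rw [← Padic.norm_intCast_lt_one_iff]
      simpa using h
    exact hpa (by exact_mod_cast this)
  linarith [lt_or_eq_of_le hle |>.resolve_left hlt]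

include ha2 in
theorem factor_eq {i s : ℕ} (his : i ≤ s) :
    ((a : ℕ) : ℚ_[p]) ^ s - ((a : ℕ) : ℚ_[p]) ^ i
      = ((a : ℕ) : ℚ_[p]) ^ i * ((a ^ (s - i) - 1 : ℕ) : ℚ_[p]) := by
  have h1 : (1 : ℕ) ≤ a ^ (s - i) := Nat.one_le_pow _ _ (by omega)
  push_cast [Nat.cast_sub h1]
  rw [mul_sub, mul_one, ← pow_add, Nat.add_sub_cancel' his]

include ha2 in
theorem factor_ne {i s : ℕ} (his : i < s) :
    ((a : ℕ) : ℚ_[p]) ^ s - ((a : ℕ) : ℚ_[p]) ^ i ≠ 0 := by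
  rw [factor_eq ha2 his.le]
  have h1 : 1 < a ^ (s - i) := one_lt_pow₀ ha2 (by omega)
  exact mul_ne_zero (pow_ne_zero _ (by exact_mod_cast (by omega : a ≠ 0)))
    (by exact_mod_cast (by omega : a ^ (s - i) - 1 ≠ 0))

include hodd ha2 hpa hv1 in
theorem norm_prod_eq {k s : ℕ} (hks : k ≤ s) :
    ‖∏ i ∈ range k, (((a : ℕ) : ℚ_[p]) ^ s - ((a : ℕ) : ℚ_[p]) ^ i)‖
      = (p : ℝ) ^ (-(k : ℤ)) * ‖((s.descFactorial k : ℕ) : ℚ_[p])‖ := by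
  rw [norm_prod]
  have per : ∀ i ∈ range k,
      ‖((a : ℕ) : ℚ_[p]) ^ s - ((a : ℕ) : ℚ_[p]) ^ i‖ = (p : ℝ)⁻¹ * ‖((s - i : ℕ) : ℚ_[p])‖ := by
    intro i hi
    have his : i < s := lt_of_lt_of_le (mem_range.mp hi) hks
    rw [factor_eq ha2 his.le, norm_mul, norm_pow, norm_a_eq_one hpa, one_pow, one_mul,
      norm_pow_sub_one hodd ha2 hpa hv1 (by omega)]
  rw [Finset.prod_congr rfl per, prod_mul_distrib, prod_const, card_range,
    ← norm_prod, ← Nat.cast_prod, ← Nat.descFactorial_eq_prod_range]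
  congr 1
  rw [zpow_neg, zpow_natCast, inv_pow]

include hodd ha2 hpa hv1 in
theorem cbar_norm_le {k s : ℕ} (hks : k ≤ s) :
    ‖∏ i ∈ range k, ((((a : ℕ) : ℚ_[p]) ^ k - ((a : ℕ) : ℚ_[p]) ^ i)⁻¹
        * (((a : ℕ) : ℚ_[p]) ^ s - ((a : ℕ) : ℚ_[p]) ^ i))‖ ≤ 1 := by
  rw [prod_mul_distrib, norm_mul, Finset.prod_inv_distrib, norm_inv,
    norm_prod_eq hodd ha2 hpa hv1 (le_refl k), norm_prod_eq hodd ha2 hpa hv1 hks,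
    Nat.descFactorial_self, Nat.descFactorial_eq_factorial_mul_choose]
  have hp0 : (0 : ℝ) < (p : ℝ) ^ (-(k : ℤ)) := by
    apply zpow_pos
    exact_mod_cast hp.out.pos
  have hf0 : (0 : ℝ) < ‖((Nat.factorial k : ℕ) : ℚ_[p])‖ := by
    rw [norm_pos_iff]
    exact_mod_cast k.factorial_ne_zero
  have hsplit : ((Nat.factorial k * s.choose k : ℕ) : ℚ_[p])
      = ((Nat.factorial k : ℕ) : ℚ_[p]) * ((s.choose k : ℕ) : ℚ_[p]) := by push_cast; ring
  rw [hsplit, norm_mul]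
  have hch : ‖((s.choose k : ℕ) : ℚ_[p])‖ ≤ 1 := by
    have := Padic.norm_int_le_one (p := p) (s.choose k : ℤ)
    simpa using this
  rw [mul_inv]
  calc ((p : ℝ) ^ (-(k : ℤ)))⁻¹ * ‖((Nat.factorial k : ℕ) : ℚ_[p])‖⁻¹
        * ((p : ℝ) ^ (-(k : ℤ)) * (‖((Nat.factorial k : ℕ) : ℚ_[p])‖ * ‖((s.choose k : ℕ) : ℚ_[p])‖))
      = ‖((s.choose k : ℕ) : ℚ_[p])‖ := by
        rw [show ((p : ℝ) ^ (-(k : ℤ)))⁻¹ * ‖((Nat.factorial k : ℕ) : ℚ_[p])‖⁻¹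
            * ((p : ℝ) ^ (-(k : ℤ)) * (‖((Nat.factorial k : ℕ) : ℚ_[p])‖ * ‖((s.choose k : ℕ) : ℚ_[p])‖))
          = (((p : ℝ) ^ (-(k : ℤ)))⁻¹ * (p : ℝ) ^ (-(k : ℤ)))
            * ((‖((Nat.factorial k : ℕ) : ℚ_[p])‖⁻¹ * ‖((Nat.factorial k : ℕ) : ℚ_[p])‖)
              * ‖((s.choose k : ℕ) : ℚ_[p])‖) from by ring,
          inv_mul_cancel₀ (ne_of_gt hp0), inv_mul_cancel₀ (ne_of_gt hf0), one_mul, one_mul]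
    _ ≤ 1 := hch

end Analytic

section Poly

variable {p : ℕ} [hp : Fact p.Prime]

noncomputable def lamAux (E : ℕ → ℚ_[p]) (cb : ℕ → ℕ → ℚ_[p]) : ℕ → ℚ_[p]
  | s => E s - ∑ k ∈ (Finset.range s).attach,
      lamAux E cb (k : ℕ) * cb (k : ℕ) s
decreasing_by exact Finset.mem_range.mp k.2

theorem lamAux_eq (E : ℕ → ℚ_[p]) (cb : ℕ → ℕ → ℚ_[p]) (s : ℕ) :
    lamAux E cb s = E s - ∑ k ∈ Finset.range s, lamAux E cb k * cb k s := by
  rw [lamAux]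
  congr 1
  exact Finset.sum_attach (Finset.range s) (fun n => lamAux E cb n * cb n s)

theorem hom_degree {d : ℕ} {f : MvPolynomial (Fin 2) ℚ_[p]} (hf : f.IsHomogeneous d)
    {m : Fin 2 →₀ ℕ} (hm : coeff m f ≠ 0) : m 0 + m 1 = d := by
  have := hf hm
  simpa [Finsupp.weight_apply, Finsupp.sum_fintype, Fin.sum_univ_two] using this

theorem aeval_CX {d : ℕ} {f : MvPolynomial (Fin 2) ℚ_[p]} (hf : f.IsHomogeneous d)
    (c : Fin 2 → ℚ_[p]) :
    MvPolynomial.aeval (fun i : Fin 2 => Polynomial.C (c i) * Polynomial.X) f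
      = Polynomial.C (MvPolynomial.eval c f) * Polynomial.X ^ d := by
  rw [MvPolynomial.aeval_def, MvPolynomial.eval₂_eq', MvPolynomial.eval_eq', map_sum,
    Finset.sum_mul]
  refine Finset.sum_congr rfl fun m hm => ?_
  have hdeg : m 0 + m 1 = d := hom_degree hf (MvPolynomial.mem_support_iff.mp hm)
  rw [Fin.prod_univ_two, Fin.prod_univ_two, Polynomial.algebraMap_eq,
    mul_pow, mul_pow, ← Polynomial.C_pow, ← Polynomial.C_pow, Polynomial.C_mul, Polynomial.C_mul,
    ← hdeg, pow_add]
  ring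

theorem aeval_one_X (g : MvPolynomial (Fin 2) ℚ_[p]) :
    MvPolynomial.aeval (fun i : Fin 2 => if i = 0 then 1 else Polynomial.X) g
      = ∑ m ∈ g.support, Polynomial.C (coeff m g) * Polynomial.X ^ (m 1) := by
  rw [MvPolynomial.aeval_def, MvPolynomial.eval₂_eq']
  refine Finset.sum_congr rfl fun m hm => ?_
  rw [Fin.prod_univ_two, Polynomial.algebraMap_eq]
  simp

theorem eval_one_X_eval (g : MvPolynomial (Fin 2) ℚ_[p]) (y : ℚ_[p]) :
    Polynomial.eval y
        (MvPolynomial.aeval (fun i : Fin 2 => if i = 0 then 1 else Polynomial.X) g)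
      = MvPolynomial.eval (fun i : Fin 2 => if i = 0 then 1 else y) g := by
  rw [aeval_one_X, MvPolynomial.eval_eq', Polynomial.eval_finset_sum]
  refine Finset.sum_congr rfl fun m hm => ?_
  rw [Polynomial.eval_mul, Polynomial.eval_C, Polynomial.eval_pow, Polynomial.eval_X,
    Fin.prod_univ_two]
  simp

theorem natdeg_le {d : ℕ} {g : MvPolynomial (Fin 2) ℚ_[p]} (hg : g.IsHomogeneous d) :
    (MvPolynomial.aeval (fun i : Fin 2 => if i = 0 then 1 else Polynomial.X :
        Fin 2 → Polynomial ℚ_[p]) g).natDegree ≤ d := by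
  rw [aeval_one_X]
  apply Polynomial.natDegree_sum_le_of_forall_le
  intro m hm
  refine le_trans (Polynomial.natDegree_C_mul_le _ _) ?_
  rw [Polynomial.natDegree_X_pow]
  have := hom_degree hg (MvPolynomial.mem_support_iff.mp hm)
  omega

theorem hom_zero {d : ℕ} {g : MvPolynomial (Fin 2) ℚ_[p]} (hg : g.IsHomogeneous d)
    (hP : MvPolynomial.aeval
      (fun i : Fin 2 => if i = 0 then 1 else Polynomial.X : Fin 2 → Polynomial ℚ_[p]) g = 0) :
    g = 0 := by
  rw [aeval_one_X] at hP
  ext m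
  rw [coeff_zero]
  by_contra h
  have hm : m ∈ g.support := MvPolynomial.mem_support_iff.mpr h
  have hc := congrArg (fun P => Polynomial.coeff P (m 1)) hP
  simp only [Polynomial.finset_sum_coeff, Polynomial.coeff_C_mul, Polynomial.coeff_X_pow,
    Polynomial.coeff_zero] at hc
  rw [Finset.sum_eq_single m] at hc
  · simp at hc
    exact h hc
  · intro m' hm' hne
    have h1 := hom_degree hg (MvPolynomial.mem_support_iff.mp hm')
    have h2 := hom_degree hg (MvPolynomial.mem_support_iff.mp hm)
    by_cases he : m 1 = m' 1
    · exfalso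
      apply hne
      ext i
      fin_cases i
      · show m' 0 = m 0
        omega
      · show m' 1 = m 1
        omega
    · simp [he]
  · intro hmn
    exact absurd hm hmn

theorem cpoly_homog (q : ℤ) (k : ℕ) : (cpoly p q k).IsHomogeneous k := by
  have h : ∀ i ∈ Finset.range k,
      ((MvPolynomial.C ((((q : ℚ_[p]) ^ (p - 1)) ^ k - ((q : ℚ_[p]) ^ (p - 1)) ^ i)⁻¹) *
        (MvPolynomial.X 1 - MvPolynomial.C (((q : ℚ_[p]) ^ (p - 1)) ^ i) *
          MvPolynomial.X 0) : MvPolynomial (Fin 2) ℚ_[p])).IsHomogeneous 1 := by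
    intro i _
    have h1 : (MvPolynomial.X 1 - MvPolynomial.C (((q : ℚ_[p]) ^ (p - 1)) ^ i) *
        MvPolynomial.X 0 : MvPolynomial (Fin 2) ℚ_[p]).IsHomogeneous 1 := by
      refine (MvPolynomial.isHomogeneous_X _ _).sub ?_
      simpa using (MvPolynomial.isHomogeneous_C (Fin 2)
        ((((q : ℚ_[p]) ^ (p - 1)) ^ i))).mul (MvPolynomial.isHomogeneous_X _ 0)
    simpa using (MvPolynomial.isHomogeneous_C (Fin 2) _).mul h1
  have := MvPolynomial.IsHomogeneous.prod (Finset.range k) _ (fun _ => 1) h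
  simpa [cpoly] using this

theorem cpoly_eval (q : ℤ) (k : ℕ) (c : Fin 2 → ℚ_[p]) :
    MvPolynomial.eval c (cpoly p q k)
      = ∏ i ∈ Finset.range k, ((((q : ℚ_[p]) ^ (p - 1)) ^ k - ((q : ℚ_[p]) ^ (p - 1)) ^ i)⁻¹ *
          (c 1 - ((q : ℚ_[p]) ^ (p - 1)) ^ i * c 0)) := by
  rw [cpoly, map_prod]
  refine Finset.prod_congr rfl fun i _ => ?_
  simp

end Poly

end Stmt4Aux

/-- if `f ∈ ℚ_p[u,v]` is homogeneous and `f(kt, lt) ∈ ℤ_p[t]` for all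
`k, l ∈ 1 + pℤ_p`, then `f` is a `ℤ_p[u]`-linear combination of the `c_k`. -/
theorem stmt4 (p : ℕ) [Fact p.Prime] (hodd : Odd p) (q : ℤ)
    (hq : orderOf ((q : ZMod (p ^ 2))) = p * (p - 1))
    (f : MvPolynomial (Fin 2) ℚ_[p]) (d : ℕ) (hf : f.IsHomogeneous d)
    (hint : ∀ a b : ℤ_[p], ∀ n : ℕ,
      ‖(MvPolynomial.aeval (fun i : Fin 2 =>
          if i = 0 then Polynomial.C (((1 + p * a : ℤ_[p]) : ℚ_[p])) * Polynomial.X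
          else Polynomial.C (((1 + p * b : ℤ_[p]) : ℚ_[p])) * Polynomial.X) f).coeff n‖ ≤ 1) :
    ∃ (N : ℕ) (g : ℕ → ℕ → ℤ_[p]),
      f = ∑ k ∈ Finset.range N,
        (∑ j ∈ Finset.range N, C ((g k j : ℚ_[p])) * (X 0) ^ j) * cpoly p q k := by
  classical
  have hqnd := Stmt4Aux.hqnd hq
  have hA1 := Stmt4Aux.hA1 hq
  have hA2 := Stmt4Aux.hA2 hq
  have hAnn : (0:ℤ) ≤ q ^ (p - 1) := by
    have hev : Even (p - 1) := Nat.Odd.sub_odd hodd odd_one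
    exact hev.pow_nonneg q
  set Qc : ℚ_[p] := ((q : ℚ_[p]) ^ (p - 1)) with hQc
  set a : ℕ := (q ^ (p - 1)).toNat with hadef
  have ha : (a : ℤ) = q ^ (p - 1) := Int.toNat_of_nonneg hAnn
  have hq0 : q ≠ 0 := by rintro rfl; exact hqnd ⟨0, by ring⟩
  have ha0 : a ≠ 0 := by
    intro h
    have h2 : (q:ℤ) ^ (p-1) = 0 := by rw [← ha, h]; simp
    exact pow_ne_zero _ hq0 h2
  have ha1 : a ≠ 1 := by
    intro h
    apply hA2
    have h2 : (q:ℤ) ^ (p-1) = 1 := by rw [← ha, h]; simp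
    rw [h2]
    simp
  have ha2 : 1 < a := by omega
  have hpa : ¬ p ∣ a := by
    intro hdvd
    have h1 : (p:ℤ) ∣ (a:ℤ) := Int.natCast_dvd_natCast.mpr hdvd
    rw [ha] at h1
    have h2 : (p:ℤ) ∣ 1 := by
      have := dvd_sub h1 hA1
      simpa using this
    have h3 := Int.le_of_dvd one_pos h2
    have h4 := Fact.out (p := p.Prime)
    have := h4.two_le
    omega
  have hcast : ((a - 1 : ℕ) : ℤ) = q ^ (p - 1) - 1 := by
    rw [Nat.cast_sub (by omega : 1 ≤ a), ha]
    simp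
  have hd1 : p ∣ a - 1 := by
    have h1 : (p:ℤ) ∣ ((a - 1 : ℕ) : ℤ) := by rw [hcast]; exact hA1
    exact_mod_cast h1
  have hnd2 : ¬ p^2 ∣ a - 1 := by
    intro h
    apply hA2
    have h1 : ((p^2 : ℕ) : ℤ) ∣ ((a - 1 : ℕ) : ℤ) := Int.natCast_dvd_natCast.mpr h
    rw [hcast] at h1
    exact_mod_cast h1
  have hv1 : padicValNat p (a - 1) = 1 := by
    have hne : a - 1 ≠ 0 := by omega
    have hle : 1 ≤ padicValNat p (a-1) := by
      have := (padicValNat_dvd_iff (p := p) 1 (a-1)).mp (by simpa using hd1)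
      tauto
    have hlt : padicValNat p (a-1) < 2 := by
      by_contra hge
      exact hnd2 ((padicValNat_dvd_iff (p := p) 2 (a-1)).mpr (Or.inr (by omega)))
    omega
  have hQa : Qc = ((a : ℕ) : ℚ_[p]) := by
    have h1 : ((a:ℤ) : ℚ_[p]) = ((q ^ (p-1) : ℤ) : ℚ_[p]) := by rw [ha]
    push_cast at h1
    rw [hQc, ← h1]
  -- the quantities c_k(1, q̂^s)
  set cbar : ℕ → ℕ → ℚ_[p] :=
    fun k s => ∏ i ∈ Finset.range k, ((Qc ^ k - Qc ^ i)⁻¹ * (Qc ^ s - Qc ^ i)) with hcbar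
  have hcb_le : ∀ k s, k ≤ s → ‖cbar k s‖ ≤ 1 := by
    intro k s hks
    simp only [hcbar, hQa]
    exact Stmt4Aux.cbar_norm_le hodd ha2 hpa hv1 hks
  have hcb_diag : ∀ s, cbar s s = 1 := by
    intro s
    simp only [hcbar, hQa]
    apply Finset.prod_eq_one
    intro i hi
    exact inv_mul_cancel₀ (Stmt4Aux.factor_ne ha2 (Finset.mem_range.mp hi))
  have hcb_zero : ∀ k s, s < k → cbar k s = 0 := by
    intro k s hsk
    simp only [hcbar]
    apply Finset.prod_eq_zero (Finset.mem_range.mpr hsk)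
    rw [sub_self, mul_zero]
  -- the values f(1, q̂^s)
  set cs : ℕ → (Fin 2 → ℚ_[p]) := fun s => (fun i => if i = 0 then 1 else Qc ^ s) with hcs
  set E : ℕ → ℚ_[p] := fun s => MvPolynomial.eval (cs s) f with hE
  have hEle : ∀ s, ‖E s‖ ≤ 1 := by
    intro s
    have hps : p ∣ a ^ s - 1 := dvd_trans hd1 (by simpa using Nat.sub_dvd_pow_sub_pow a 1 s)
    obtain ⟨c, hc⟩ := hps
    have has1 : a ^ s = 1 + p * c := by
      have h1 : 1 ≤ a ^ s := Nat.one_le_pow _ _ (by omega)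
      omega
    have hb : ((1 + (p : ℤ_[p]) * (c : ℤ_[p]) : ℤ_[p]) : ℚ_[p]) = Qc ^ s := by
      have h2 : Qc ^ s = ((a ^ s : ℕ) : ℚ_[p]) := by rw [hQa]; push_cast; ring
      rw [h2, has1]
      push_cast
      ring
    have hv := hint 0 (c : ℤ_[p]) d
    have hfun : (fun i : Fin 2 =>
        if i = 0 then Polynomial.C (((1 + p * 0 : ℤ_[p]) : ℚ_[p])) * Polynomial.X
        else Polynomial.C (((1 + p * (c : ℤ_[p]) : ℤ_[p]) : ℚ_[p])) * Polynomial.X)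
        = fun i : Fin 2 => Polynomial.C (cs s i) * Polynomial.X := by
      funext i
      by_cases hi : i = 0
      · simp [hi, hcs]
      · rw [if_neg hi]
        simp only [hcs, if_neg hi]
        rw [hb]
    rw [hfun, Stmt4Aux.aeval_CX hf (cs s)] at hv
    simp only [Polynomial.coeff_C_mul, Polynomial.coeff_X_pow, eq_self_iff_true, if_true,
      mul_one] at hv
    simpa only [hE] using hv
  -- the coefficients λ
  set lam : ℕ → ℚ_[p] := Stmt4Aux.lamAux E cbar with hlamdef
  have hlam_eq : ∀ s, lam s = E s - ∑ k ∈ Finset.range s, lam k * cbar k s := by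
    intro s
    have hkey := Stmt4Aux.lamAux_eq E cbar s
    rw [← hlamdef] at hkey
    exact hkey
  have hlam_le : ∀ s, ‖lam s‖ ≤ 1 := by
    intro s
    induction s using Nat.strong_induction_on with
    | _ s ih =>
      rw [hlam_eq s]
      have hsum : ‖∑ k ∈ Finset.range s, lam k * cbar k s‖ ≤ 1 := by
        apply IsUltrametricDist.norm_sum_le_of_forall_le_of_nonneg zero_le_one
        intro k hk
        have hk' := Finset.mem_range.mp hk
        calc ‖lam k * cbar k s‖ = ‖lam k‖ * ‖cbar k s‖ := norm_mul _ _
          _ ≤ 1 * 1 := mul_le_mul (ih k hk') (hcb_le k s hk'.le) (norm_nonneg _) zero_le_one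
          _ = 1 := one_mul 1
      calc ‖E s - ∑ k ∈ Finset.range s, lam k * cbar k s‖
          = ‖E s + -(∑ k ∈ Finset.range s, lam k * cbar k s)‖ := by rw [sub_eq_add_neg]
        _ ≤ max ‖E s‖ ‖-(∑ k ∈ Finset.range s, lam k * cbar k s)‖ :=
            Padic.nonarchimedean _ _
        _ ≤ 1 := by rw [norm_neg]; exact max_le (hEle s) hsum
  have hEs : ∀ s, E s = ∑ k ∈ Finset.range (s+1), lam k * cbar k s := by
    intro s
    rw [Finset.sum_range_succ, hcb_diag s, mul_one, hlam_eq s]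
    ring
  have hEs' : ∀ s, s ≤ d → E s = ∑ k ∈ Finset.range (d+1), lam k * cbar k s := by
    intro s hs
    rw [hEs s]
    apply Finset.sum_subset
    · intro x hx
      simp only [Finset.mem_range] at hx ⊢
      omega
    · intro k hk hknot
      simp only [Finset.mem_range] at hk hknot
      rw [hcb_zero k s (by omega), mul_zero]
  -- the candidate combination
  set F : MvPolynomial (Fin 2) ℚ_[p] :=
    ∑ k ∈ Finset.range (d+1), (C (lam k) * (X 0) ^ (d - k)) * cpoly p q k with hFdef
  have hFhom : F.IsHomogeneous d := by
    apply MvPolynomial.IsHomogeneous.sum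
    intro k hk
    have hk' := Finset.mem_range.mp hk
    have h1 : (C (lam k) * (X 0) ^ (d - k) : MvPolynomial (Fin 2) ℚ_[p]).IsHomogeneous (d - k) :=
      MvPolynomial.isHomogeneous_C_mul_X_pow _ _ _
    have h2 := h1.mul (Stmt4Aux.cpoly_homog q k)
    rwa [Nat.sub_add_cancel (by omega)] at h2
  have hFeval : ∀ s, MvPolynomial.eval (cs s) F
      = ∑ k ∈ Finset.range (d+1), lam k * cbar k s := by
    intro s
    rw [hFdef, map_sum]
    refine Finset.sum_congr rfl fun k hk => ?_
    rw [map_mul, map_mul, MvPolynomial.eval_C, map_pow, MvPolynomial.eval_X,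
      Stmt4Aux.cpoly_eval]
    have h0 : cs s 0 = 1 := by simp [hcs]
    have h1 : cs s 1 = Qc ^ s := by
      simp only [hcs]
      rw [if_neg (by decide : (1 : Fin 2) ≠ 0)]
    rw [h0, h1, one_pow, mul_one]
    simp only [hcbar, hQc, mul_one]
  -- f = F
  have hfF : f = F := by
    have hg : (f - F).IsHomogeneous d := hf.sub hFhom
    have hP0 : MvPolynomial.aeval
        (fun i : Fin 2 => if i = 0 then 1 else Polynomial.X : Fin 2 → Polynomial ℚ_[p])
        (f - F) = 0 := by
      apply Polynomial.eq_zero_of_natDegree_lt_card_of_eval_eq_zero' _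
        ((Finset.range (d+1)).image (fun s => Qc ^ s))
      · intro y hy
        obtain ⟨s, hs, rfl⟩ := Finset.mem_image.mp hy
        rw [Stmt4Aux.eval_one_X_eval]
        have hcseq : (fun i : Fin 2 => if i = 0 then 1 else Qc ^ s) = cs s := by
          simp only [hcs]
        rw [hcseq, map_sub, hFeval s,
          show MvPolynomial.eval (cs s) f = E s by simp only [hE],
          hEs' s (by simp only [Finset.mem_range] at hs; omega)]
        ring
      · have hcard : ((Finset.range (d+1)).image (fun s => Qc ^ s)).card = d + 1 := by
          rw [Finset.card_image_of_injOn, Finset.card_range]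
          intro x hx y hy hxy
          simp only [hQa] at hxy
          exact Nat.pow_right_injective ha2 (by exact_mod_cast hxy)
        rw [hcard]
        exact lt_of_le_of_lt (Stmt4Aux.natdeg_le hg) (by omega)
    have h3 := Stmt4Aux.hom_zero hg hP0
    exact (sub_eq_zero.mp h3)
  -- assemble the answer
  set gfun : ℕ → ℕ → ℤ_[p] :=
    fun k j => if k ≤ d ∧ j = d - k then ⟨lam k, hlam_le k⟩ else 0 with hgf
  refine ⟨d + 1, gfun, ?_⟩
  rw [hfF, hFdef]
  refine Finset.sum_congr rfl fun k hk => ?_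
  have hk' := Finset.mem_range.mp hk
  congr 1
  rw [Finset.sum_eq_single (d - k)]
  · have hgeq : gfun k (d - k) = ⟨lam k, hlam_le k⟩ := by
      simp only [hgf]
      exact if_pos (show k ≤ d ∧ True from ⟨by omega, trivial⟩)
    rw [hgeq]
  · intro j hj hne
    have hgeq : gfun k j = 0 := by
      simp only [hgf]
      exact if_neg (show ¬(k ≤ d ∧ j = d - k) from fun h => hne h.2)
    rw [hgeq]
    simp
  · intro hnin
    exact absurd (Finset.mem_range.mpr (by omega)) hnin
end

section
/- With R as above and X_n = ∏_{i=0}^{n-1}(R − q̂^i I), for every n ≥ 1, s ≥ 1 and 0 ≤ c ≤ n, the (s, s+c)-entry of X_n equals ∑_{i=c}^n (−1)^(n−i) q̂^(C(n−i,2) + (s−1)(i−c)) [n choose i]_{q̂} [i choose i−c]_{q̂}; moreover (X_n)_{s,s+c} = 0 if c < 0 or c > n. -/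
/-- The Gaussian (`q`-binomial) coefficient `[n choose i]_q`. -/
def gaussBinom {R : Type*} [CommRing R] (q : R) : ℕ → ℕ → R
  | _, 0 => 1
  | 0, _ + 1 => 0
  | n + 1, i + 1 => gaussBinom q n i + q ^ (i + 1) * gaussBinom q n (i + 1)

/-- Product of ℕ×ℕ upper triangular matrices. -/
def utMul {R : Type*} [Semiring R] (A B : ℕ → ℕ → R) : ℕ → ℕ → R :=
  fun i j => ∑ k ∈ Finset.Icc i j, A i k * B k j

/-- The matrix `R` with `R_{i,i} = q̂^i`, `R_{i,i+1} = 1` (indices from 0). -/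
def Rmat {R : Type*} [Semiring R] (qh : R) : ℕ → ℕ → R :=
  fun i j => if i = j then qh ^ i else if j = i + 1 then 1 else 0

/-- `X_n = (R − I)(R − q̂ I)⋯(R − q̂^(n−1) I)`. -/
def Xmat {R : Type*} [Ring R] (qh : R) : ℕ → ℕ → ℕ → R
  | 0 => fun i j => if i = j then 1 else 0
  | n + 1 => utMul (Xmat qh n) (fun i j => Rmat qh i j - if i = j then qh ^ n else 0)

section GB
variable {S : Type*} [CommRing S] (q : S)

lemma gb_zero_right (n : ℕ) : gaussBinom q n 0 = 1 := by cases n <;> rfl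

lemma gb_succ_succ (n i : ℕ) :
    gaussBinom q (n+1) (i+1) = gaussBinom q n i + q ^ (i + 1) * gaussBinom q n (i+1) := rfl

lemma gb_of_lt : ∀ n i : ℕ, n < i → gaussBinom q n i = 0 := by
  intro n
  induction n with
  | zero => intro i h; match i, h with | i+1, _ => rfl
  | succ n ih =>
    intro i h
    match i, h with
    | i+1, h =>
      rw [gb_succ_succ, ih i (by omega), ih (i+1) (by omega)]
      ring

lemma gb_diag (n : ℕ) : gaussBinom q n n = 1 := by
  induction n with
  | zero => rfl
  | succ n ih => rw [gb_succ_succ, ih, gb_of_lt q n (n+1) (by omega)]; ring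

lemma gb_pascal2 : ∀ n k : ℕ,
    gaussBinom q (n+1) (k+1) = q ^ (n-k) * gaussBinom q n k + gaussBinom q n (k+1) := by
  intro n
  induction n with
  | zero =>
    intro k
    match k with
    | 0 => rw [gb_succ_succ]; simp [gb_zero_right, gb_of_lt q 0 1 (by omega)]
    | k+1 =>
      rw [gb_succ_succ, gb_of_lt q 0 (k+1) (by omega), gb_of_lt q 0 (k+2) (by omega)]
      ring
  | succ n ih =>
    intro k
    match k with
    | 0 =>
      have hdef0 : gaussBinom q (n+1+1) (0+1)
          = gaussBinom q (n+1) 0 + q^(0+1) * gaussBinom q (n+1) (0+1) := rfl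
      have hdef1 : gaussBinom q (n+1) (0+1)
          = gaussBinom q n 0 + q^(0+1) * gaussBinom q n (0+1) := rfl
      have h1 := ih 0
      simp only [gb_zero_right, Nat.sub_zero] at hdef0 hdef1 h1 ⊢
      linear_combination hdef0 + q * h1 - hdef1
    | k+1 =>
      have hdef0 : gaussBinom q (n+1+1) (k+1+1)
          = gaussBinom q (n+1) (k+1) + q^(k+1+1) * gaussBinom q (n+1) (k+1+1) := rfl
      have hdef1 : gaussBinom q (n+1) (k+1)
          = gaussBinom q n k + q^(k+1) * gaussBinom q n (k+1) := rfl
      have hdef2 : gaussBinom q (n+1) (k+1+1)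
          = gaussBinom q n (k+1) + q^(k+1+1) * gaussBinom q n (k+1+1) := rfl
      have h1 := ih k
      have h2 := ih (k+1)
      rcases le_or_gt n k with h | h
      · rcases eq_or_lt_of_le h with rfl | h
        · simp [gb_diag, gb_of_lt q (n+1) (n+1+1) (by omega)]
        · rw [gb_of_lt q (n+1+1) (k+1+1) (by omega), gb_of_lt q (n+1) (k+1) (by omega),
            gb_of_lt q (n+1) (k+1+1) (by omega)]
          ring
      · obtain ⟨m, rfl⟩ : ∃ m, n = k + 1 + m := ⟨n - (k+1), by omega⟩
        rw [show k+1+m - k = m+1 by omega] at h1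
        rw [show k+1+m - (k+1) = m by omega] at h2
        rw [show k+1+m+1 - (k+1) = m+1 by omega]
        linear_combination hdef0 + h1 + q^(k+1+1) * h2 - q^(m+1) * hdef1 - hdef2

lemma choose2_succ (e : ℕ) : (e+1).choose 2 = e.choose 2 + e := by
  rw [Nat.choose_succ_succ, Nat.choose_one_right, Nat.add_comm]

/-- the generic term of the entry formula: `n = c + d`, column offset `c`, index `t`. -/
def Fterm (q : S) (s d c t : ℕ) : S :=
  (-1)^(d-t) * q^((d-t).choose 2 + s*t) * gaussBinom q (c+d) (c+t) * gaussBinom q (c+t) t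

lemma key1 (s c d : ℕ) :
    (∑ t ∈ Finset.range (d+1), Fterm q s d (c+1) t)
      = (∑ t ∈ Finset.range (d+1), Fterm q s d c t)
        + (∑ t ∈ Finset.range d,
            (-1:S)^(d-1-t) * q^((d-1-t).choose 2 + s*t)
              * gaussBinom q (c+d) ((c+1)+t) * gaussBinom q ((c+1)+t) t)
          * (q^(s+(c+1)) - q^(c+d)) := by
  have hsplit : ∀ t ∈ Finset.range (d+1),
      Fterm q s d (c+1) t
        = ((-1:S)^(d-t) * q^((d-t).choose 2 + s*t)
            * gaussBinom q (c+d) (c+t) * gaussBinom q (c+t+1) t)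
          + ((-1:S)^(d-t) * q^((d-t).choose 2 + s*t) * q^(c+t+1)
            * gaussBinom q (c+d) (c+t+1) * gaussBinom q (c+t+1) t) := by
    intro t _
    unfold Fterm
    rw [show (c+1)+d = (c+d)+1 by omega, show (c+1)+t = (c+t)+1 by omega,
      gb_succ_succ q (c+d) (c+t)]
    ring
  rw [Finset.sum_congr rfl hsplit, Finset.sum_add_distrib]
  have hS2 : (∑ t ∈ Finset.range (d+1),
        ((-1:S)^(d-t) * q^((d-t).choose 2 + s*t) * q^(c+t+1)
          * gaussBinom q (c+d) (c+t+1) * gaussBinom q (c+t+1) t))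
      = (∑ t ∈ Finset.range d,
          (-1:S)^(d-1-t) * q^((d-1-t).choose 2 + s*t)
            * gaussBinom q (c+d) ((c+1)+t) * gaussBinom q ((c+1)+t) t) * (-q^(c+d)) := by
    rw [Finset.sum_range_succ, gb_of_lt q (c+d) (c+d+1) (by omega), Finset.sum_mul]
    simp only [mul_zero, zero_mul, add_zero]
    refine Finset.sum_congr rfl ?_
    intro t ht
    have htd : t < d := Finset.mem_range.mp ht
    obtain ⟨e, rfl⟩ : ∃ e, d = t + 1 + e := ⟨d - t - 1, by omega⟩
    rw [show t+1+e-t = e+1 by omega, show t+1+e-1-t = e by omega, choose2_succ,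
      show (c+1)+t = c+t+1 by omega]
    ring
  rw [hS2]
  have hS1 : (∑ t ∈ Finset.range (d+1),
        ((-1:S)^(d-t) * q^((d-t).choose 2 + s*t)
          * gaussBinom q (c+d) (c+t) * gaussBinom q (c+t+1) t))
      = (∑ t ∈ Finset.range (d+1), Fterm q s d c t)
        + (∑ t ∈ Finset.range d,
            (-1:S)^(d-1-t) * q^((d-1-t).choose 2 + s*t)
              * gaussBinom q (c+d) ((c+1)+t) * gaussBinom q ((c+1)+t) t) * q^(s+(c+1)) := by
    rw [Finset.sum_range_succ' (fun t => (-1:S)^(d-t) * q^((d-t).choose 2 + s*t)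
          * gaussBinom q (c+d) (c+t) * gaussBinom q (c+t+1) t) d,
      Finset.sum_range_succ' (fun t => Fterm q s d c t) d, Finset.sum_mul]
    have h0 : ((-1:S)^(d-0) * q^((d-0).choose 2 + s*0)
          * gaussBinom q (c+d) (c+0) * gaussBinom q (c+0+1) 0)
        = Fterm q s d c 0 := by
      unfold Fterm
      rw [gb_zero_right, gb_zero_right]
    have hterm : ∀ u ∈ Finset.range d,
        ((-1:S)^(d-(u+1)) * q^((d-(u+1)).choose 2 + s*(u+1))
          * gaussBinom q (c+d) (c+(u+1)) * gaussBinom q (c+(u+1)+1) (u+1))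
        = Fterm q s d c (u+1)
          + ((-1:S)^(d-1-u) * q^((d-1-u).choose 2 + s*u)
              * gaussBinom q (c+d) ((c+1)+u) * gaussBinom q ((c+1)+u) u) * q^(s+(c+1)) := by
      intro u hu
      have hud : u < d := Finset.mem_range.mp hu
      obtain ⟨e, rfl⟩ : ∃ e, d = u + 1 + e := ⟨d - u - 1, by omega⟩
      unfold Fterm
      rw [show c+(u+1)+1 = (c+u+1)+1 by omega, gb_pascal2 q (c+u+1) u,
        show c+u+1-u = c+1 by omega, show u+1+e-(u+1) = e by omega,
        show u+1+e-1-u = e by omega, show (c+1)+u = c+u+1 by omega,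
        show c+(u+1) = c+u+1 by omega]
      ring
    rw [Finset.sum_congr rfl hterm, Finset.sum_add_distrib, h0]
    ring
  rw [hS1]
  ring

lemma key0 (s n : ℕ) :
    (∑ t ∈ Finset.range (n+1+1), Fterm q s (n+1) 0 t)
      = (∑ t ∈ Finset.range (n+1), Fterm q s n 0 t) * (q^s - q^n) := by
  rw [Finset.sum_range_succ' (fun t => Fterm q s (n+1) 0 t) (n+1)]
  have hterm : ∀ u ∈ Finset.range (n+1),
      Fterm q s (n+1) 0 (u+1)
        = Fterm q s n 0 u * q^s
          + (-1:S)^(n-u) * q^((n-u).choose 2 + s*(u+1) + (u+1)) * gaussBinom q n (u+1) := by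
    intro u hu
    have hun : u < n + 1 := Finset.mem_range.mp hu
    obtain ⟨e, rfl⟩ : ∃ e, n = u + e := ⟨n - u, by omega⟩
    unfold Fterm
    simp only [Nat.zero_add]
    rw [show u+e+1-(u+1) = e by omega, show u+e-u = e by omega,
      gb_succ_succ q (u+e) u, gb_diag, gb_diag]
    ring
  rw [Finset.sum_congr rfl hterm, Finset.sum_add_distrib]
  have hB : (∑ u ∈ Finset.range (n+1),
        (-1:S)^(n-u) * q^((n-u).choose 2 + s*(u+1) + (u+1)) * gaussBinom q n (u+1))
        + Fterm q s (n+1) 0 0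
      = (∑ t ∈ Finset.range (n+1), Fterm q s n 0 t) * (-q^n) := by
    rw [Finset.sum_range_succ, gb_of_lt q n (n+1) (by omega),
      Finset.sum_range_succ' (fun t => Fterm q s n 0 t) n, add_mul, Finset.sum_mul]
    simp only [mul_zero, zero_mul, add_zero, Nat.sub_self]
    have hterm2 : ∀ u ∈ Finset.range n,
        (-1:S)^(n-u) * q^((n-u).choose 2 + s*(u+1) + (u+1)) * gaussBinom q n (u+1)
          = Fterm q s n 0 (u+1) * (-q^n) := by
      intro u hu
      have hun : u < n := Finset.mem_range.mp hu
      obtain ⟨e, rfl⟩ : ∃ e, n = u + 1 + e := ⟨n - u - 1, by omega⟩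
      unfold Fterm
      simp only [Nat.zero_add]
      rw [show u+1+e-u = e+1 by omega, show u+1+e-(u+1) = e by omega, choose2_succ,
        gb_diag]
      ring
    rw [Finset.sum_congr rfl hterm2]
    have h00 : Fterm q s (n+1) 0 0 = Fterm q s n 0 0 * (-q^n) := by
      unfold Fterm
      simp only [Nat.zero_add, Nat.sub_zero, Nat.mul_zero, gb_zero_right, choose2_succ]
      ring
    rw [h00]
  rw [add_assoc, hB, ← Finset.sum_mul]
  ring


lemma Xmat_vanish : ∀ n s t : ℕ, (t < s ∨ s + n < t) → Xmat q n s t = 0 := by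
  intro n
  induction n with
  | zero =>
    intro s t h
    have : s ≠ t := by omega
    simp only [Xmat]
    rw [if_neg this]
  | succ n ih =>
    intro s t h
    simp only [Xmat, utMul]
    rcases h with h | h
    · rw [Finset.Icc_eq_empty (by omega), Finset.sum_empty]
    · refine Finset.sum_eq_zero ?_
      intro k hk
      rw [Finset.mem_Icc] at hk
      rcases le_or_gt k (s+n) with hk2 | hk2
      · have h1 : Rmat q k t = 0 := by
          simp only [Rmat]
          rw [if_neg (by omega), if_neg (by omega)]
        rw [h1, if_neg (by omega), sub_zero, mul_zero]
      · rw [ih s k (Or.inr (by omega)), zero_mul]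

lemma Xmat_entry : ∀ n c s : ℕ, c ≤ n →
    Xmat q n s (s+c) = ∑ t ∈ Finset.range (n-c+1), Fterm q s (n-c) c t := by
  intro n
  induction n with
  | zero =>
    intro c s hc
    interval_cases c
    simp [Xmat, Fterm, gb_zero_right]
  | succ n ih =>
    intro c s hc
    match c, hc with
    | 0, _ =>
      have hx0 : Xmat q (n+1) s (s+0) = Xmat q n s s * (q^s - q^n) := by
        simp only [Xmat, utMul, Nat.add_zero, Finset.Icc_self, Finset.sum_singleton]
        have h1 : Rmat q s s = q^s := by
          simp only [Rmat, if_pos]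
        rw [h1]
        simp only [if_pos]
      have hih := ih 0 s (Nat.zero_le n)
      simp only [Nat.add_zero, Nat.sub_zero] at hih hx0 ⊢
      rw [hx0, hih]
      exact (key0 q s n).symm
    | c+1, hc =>
      rw [show s+(c+1) = (s+c)+1 by omega]
      have hsubset : Finset.Icc (s+c) ((s+c)+1) ⊆ Finset.Icc s ((s+c)+1) := by
        intro k hk
        rw [Finset.mem_Icc] at *
        omega
      have hzero : ∀ k ∈ Finset.Icc s ((s+c)+1), k ∉ Finset.Icc (s+c) ((s+c)+1) →
          Xmat q n s k * (Rmat q k (s+c+1) - if k = s+c+1 then q ^ n else 0) = 0 := by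
        intro k hk hk2
        rw [Finset.mem_Icc] at hk
        rw [Finset.mem_Icc] at hk2
        have hklt : k < s + c := by omega
        have h1 : Rmat q k (s+c+1) = 0 := by
          simp only [Rmat]
          rw [if_neg (by omega), if_neg (by omega)]
        rw [h1, if_neg (by omega), sub_zero, mul_zero]
      have hx : Xmat q (n+1) s ((s+c)+1)
          = Xmat q n s (s+c) + Xmat q n s ((s+c)+1) * (q^(s+(c+1)) - q^n) := by
        simp only [Xmat, utMul]
        rw [← Finset.sum_subset hsubset hzero,
          Finset.sum_Icc_succ_top (by omega : s+c ≤ (s+c)+1), Finset.Icc_self,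
          Finset.sum_singleton]
        have h1 : Rmat q (s+c) (s+c+1) = 1 := by
          simp only [Rmat]
          rw [if_neg (by omega)]
          simp
        have h2 : Rmat q (s+c+1) (s+c+1) = q^(s+c+1) := by
          simp only [Rmat, if_pos]
        rw [h1, h2, if_neg (by omega)]
        simp only [if_pos]
        ring
      rw [hx]
      rcases le_or_gt (c+1) n with hcn | hcn
      · obtain ⟨e, rfl⟩ : ∃ e, n = c + 1 + e := ⟨n - c - 1, by omega⟩
        have hih1 := ih c s (by omega)
        rw [show c+1+e-c = e+1 by omega] at hih1
        have hih2 := ih (c+1) s (by omega)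
        rw [show s+(c+1) = (s+c)+1 by omega, show c+1+e-(c+1) = e by omega] at hih2
        rw [hih1, hih2, show c+1+e+1-(c+1) = e+1 by omega]
        have hconv : ∀ t ∈ Finset.range (e+1), Fterm q s e (c+1) t
            = (-1:S)^((e+1)-1-t) * q^(((e+1)-1-t).choose 2 + s*t)
              * gaussBinom q (c+1+e) ((c+1)+t) * gaussBinom q ((c+1)+t) t := by
          intro t ht
          unfold Fterm
          rw [show (e+1)-1-t = e-t by omega]
        rw [Finset.sum_congr rfl hconv]
        have hk := key1 q s c (e+1)
        rw [show c+(e+1) = c+1+e by omega] at hk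
        exact hk.symm
      · rw [Xmat_vanish q n s ((s+c)+1) (Or.inr (by omega)), zero_mul, add_zero,
          ih c s (by omega)]
        rw [show n-c = 0 by omega, show n+1-(c+1) = 0 by omega]
        simp only [Nat.zero_add, Finset.sum_range_one]
        unfold Fterm
        simp [gb_diag, gb_zero_right]

end GB

/-- for `n ≥ 1` and `0 ≤ c ≤ n`,
`(X_n)_{s,s+c} = ∑_{i=c}^n (−1)^(n−i) q̂^(C(n−i,2)+s(i−c)) [n choose i]_{q̂} [i choose i−c]_{q̂}`
(rows/columns indexed from 0, so `s` corresponds to `s−1` of the 1-indexed statement),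
and `(X_n)_{s,t} = 0` when `t < s` or `t > s + n`. -/
theorem stmt10 (p : ℕ) [Fact p.Prime] (hodd : Odd p) (q : ℤ)
    (hq : orderOf ((q : ZMod (p ^ 2))) = p * (p - 1)) (n : ℕ) (hn : 1 ≤ n) :
    (∀ s c : ℕ, c ≤ n →
      Xmat (((q : ℤ_[p])) ^ (p - 1)) n s (s + c) =
        ∑ i ∈ Finset.Icc c n,
          (-1 : ℤ_[p]) ^ (n - i) *
            (((q : ℤ_[p])) ^ (p - 1)) ^ (Nat.choose (n - i) 2 + s * (i - c)) *
            gaussBinom (((q : ℤ_[p])) ^ (p - 1)) n i *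
            gaussBinom (((q : ℤ_[p])) ^ (p - 1)) i (i - c)) ∧
    (∀ s t : ℕ, (t < s ∨ s + n < t) → Xmat (((q : ℤ_[p])) ^ (p - 1)) n s t = 0) := by
  constructor
  · intro s c hc
    rw [Xmat_entry (((q : ℤ_[p])) ^ (p - 1)) n c s hc,
      ← Finset.Ico_add_one_right_eq_Icc, Finset.sum_Ico_eq_sum_range,
      show n + 1 - c = n - c + 1 by omega]
    refine Finset.sum_congr rfl ?_
    intro t ht
    unfold Fterm
    rw [show c + t - c = t by omega, show n - (c + t) = n - c - t by omega,
      show c + (n - c) = n by omega]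
  · intro s t h
    exact Xmat_vanish (((q : ℤ_[p])) ^ (p - 1)) n s t h
end

section
/- Let C be an ℕ×ℕ upper triangular matrix over ℤ_p with C_{i,i} = q̂^i and C_{i,i+1} = 1 for all i ≥ 0 (other entries arbitrary elements c_{i,j} ∈ ℤ_p for j ≥ i+2). Define U recursively by U_{0,0} = 1, U_{0,j} = 0 for j > 0, and U_{i+1,j} = (∑_{s=i}^{j−2} U_{i,s} c_{s,j}) + U_{i,j−1} + (q̂^j − q̂^i) U_{i,j}. Then U is upper triangular with all diagonal entries in ℤ_p^×, hence invertible, and UC = RU where R is the matrix with R_{i,i} = q̂^i, R_{i,i+1} = 1 and all other entries zero. Consequently UCU^{-1} = R. -/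
/-- The identity ℕ×ℕ matrix. -/
def idMat {R : Type*} [Semiring R] : ℕ → ℕ → R :=
  fun i j => if i = j then 1 else 0

open Finset

section Aux
variable {R : Type*}

lemma sum_Icc_comm' [AddCommMonoid R] (i j : ℕ) (g : ℕ → ℕ → R) :
    ∑ k ∈ Icc i j, ∑ l ∈ Icc i k, g l k = ∑ l ∈ Icc i j, ∑ k ∈ Icc l j, g l k := by
  rw [Finset.sum_sigma', Finset.sum_sigma']
  apply Finset.sum_nbij' (fun x => ⟨x.2, x.1⟩) (fun x => ⟨x.2, x.1⟩)
  · rintro ⟨k, l⟩ h; simp only [mem_sigma, mem_Icc] at *; omega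
  · rintro ⟨l, k⟩ h; simp only [mem_sigma, mem_Icc] at *; omega
  · rintro ⟨k, l⟩ _; rfl
  · rintro ⟨l, k⟩ _; rfl
  · rintro ⟨k, l⟩ _; rfl

lemma utMul_assoc [Semiring R] (A B C : ℕ → ℕ → R) :
    utMul (utMul A B) C = utMul A (utMul B C) := by
  funext i j
  unfold utMul
  simp_rw [Finset.sum_mul, Finset.mul_sum, mul_assoc]
  exact sum_Icc_comm' i j (fun l k => A i l * (B l k * C k j))

lemma utMul_id [Semiring R] (A : ℕ → ℕ → R) (h : ∀ i j, j < i → A i j = 0) :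
    utMul A idMat = A := by
  funext i j
  unfold utMul idMat
  simp_rw [mul_ite, mul_one, mul_zero]
  rw [Finset.sum_ite_eq' (Icc i j) j (fun k => A i k)]
  rcases le_or_gt i j with hij | hij
  · simp [hij]
  · simp [Nat.not_le.2 hij, h i j hij]

lemma id_utMul [Semiring R] (A : ℕ → ℕ → R) (h : ∀ i j, j < i → A i j = 0) :
    utMul idMat A = A := by
  funext i j
  unfold utMul idMat
  simp_rw [ite_mul, one_mul, zero_mul]
  rw [Finset.sum_ite_eq (Icc i j) i (fun k => A k j)]
  rcases le_or_gt i j with hij | hij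
  · simp [hij]
  · simp [Nat.not_le.2 hij, h i j hij]

noncomputable def Vd [Ring R] (U : ℕ → ℕ → R) : ℕ → ℕ → R
  | 0, i => Ring.inverse (U i i)
  | (d+1), i => -(Ring.inverse (U i i)) *
      ∑ s ∈ Finset.range (d+1), U i (i+s+1) * Vd U (d-s) (i+s+1)
  termination_by d _ => d
  decreasing_by exact Nat.lt_succ_of_le (Nat.sub_le d s)

noncomputable def Vmat [Ring R] (U : ℕ → ℕ → R) : ℕ → ℕ → R :=
  fun i j => if i ≤ j then Vd U (j-i) i else 0

noncomputable def Wd [Ring R] (U : ℕ → ℕ → R) : ℕ → ℕ → R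
  | 0, i => Ring.inverse (U i i)
  | (d+1), i => -(∑ s ∈ (Finset.range (d+1)).attach, Wd U s.1 i * U (i+s.1) (i+d+1)) *
      Ring.inverse (U (i+d+1) (i+d+1))
  termination_by d _ => d
  decreasing_by exact Finset.mem_range.mp s.2

noncomputable def Wmat [Ring R] (U : ℕ → ℕ → R) : ℕ → ℕ → R :=
  fun i j => if i ≤ j then Wd U (j-i) i else 0

end Aux

section Inv
variable {R : Type*} [CommRing R] (U : ℕ → ℕ → R)

lemma Vmat_tri : ∀ i j, j < i → Vmat U i j = 0 := by
  intro i j h; simp [Vmat, Nat.not_le.2 h]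

lemma Wmat_tri : ∀ i j, j < i → Wmat U i j = 0 := by
  intro i j h; simp [Wmat, Nat.not_le.2 h]

lemma utMul_Vmat (htri : ∀ i j, j < i → U i j = 0) (hu : ∀ i, IsUnit (U i i)) :
    utMul U (Vmat U) = idMat := by
  funext i j
  unfold utMul idMat
  rcases lt_trichotomy i j with h | h | h
  · obtain ⟨d, rfl⟩ : ∃ d, j = i + d + 1 := ⟨j - i - 1, by omega⟩
    have hsplit : Finset.Icc i (i+d+1) = insert i (Finset.Icc (i+1) (i+d+1)) := by
      ext x; simp only [Finset.mem_Icc, Finset.mem_insert]; omega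
    rw [hsplit, Finset.sum_insert (by simp)]
    have h1 : Vmat U i (i+d+1) = Vd U (d+1) i := by
      simp only [Vmat, if_pos (by omega : i ≤ i + d + 1)]
      congr 1; omega
    have h2 : ∑ k ∈ Finset.Icc (i+1) (i+d+1), U i k * Vmat U k (i+d+1)
        = ∑ s ∈ Finset.range (d+1), U i (i+s+1) * Vd U (d-s) (i+s+1) := by
      rw [← Finset.Ico_add_one_right_eq_Icc, Finset.sum_Ico_eq_sum_range,
        (by omega : i+d+1+1-(i+1) = d+1)]
      refine Finset.sum_congr rfl fun s hs => ?_
      simp only [Finset.mem_range] at hs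
      have h3 : Vmat U (i+1+s) (i+d+1) = Vd U (d-s) (i+1+s) := by
        simp only [Vmat, if_pos (by omega : i+1+s ≤ i+d+1)]
        congr 1; omega
      rw [h3, (by omega : i+1+s = i+s+1)]
    rw [h1, h2, Vd, if_neg (by omega : ¬ i = i+d+1)]
    rw [neg_mul, mul_neg, ← mul_assoc, Ring.mul_inverse_cancel _ (hu i), one_mul,
      neg_add_cancel]
  · subst h
    rw [Finset.Icc_self, Finset.sum_singleton, if_pos rfl]
    have h1 : Vmat U i i = Ring.inverse (U i i) := by
      simp [Vmat, Vd]
    rw [h1, Ring.mul_inverse_cancel _ (hu i)]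
  · rw [Finset.Icc_eq_empty (by omega), Finset.sum_empty, if_neg (by omega)]

lemma Wmat_utMul (hu : ∀ i, IsUnit (U i i)) :
    utMul (Wmat U) U = idMat := by
  funext i j
  unfold utMul idMat
  rcases lt_trichotomy i j with h | h | h
  · obtain ⟨d, rfl⟩ : ∃ d, j = i + d + 1 := ⟨j - i - 1, by omega⟩
    rw [Finset.sum_Icc_succ_top (by omega : i ≤ i + d + 1)]
    have h1 : Wmat U i (i+d+1) = Wd U (d+1) i := by
      simp only [Wmat, if_pos (by omega : i ≤ i + d + 1)]
      congr 1; omega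
    have h2 : ∑ k ∈ Finset.Icc i (i+d), Wmat U i k * U k (i+d+1)
        = ∑ s ∈ Finset.range (d+1), Wd U s i * U (i+s) (i+d+1) := by
      rw [← Finset.Ico_add_one_right_eq_Icc, Finset.sum_Ico_eq_sum_range,
        (by omega : i+d+1-i = d+1)]
      refine Finset.sum_congr rfl fun s hs => ?_
      have h3 : Wmat U i (i+s) = Wd U s i := by
        simp only [Wmat, if_pos (by omega : i ≤ i+s)]
        congr 1; omega
      rw [h3]
    rw [h1, h2, Wd, if_neg (by omega : ¬ i = i+d+1)]
    rw [Finset.sum_attach (Finset.range (d+1)) (fun s => Wd U s i * U (i+s) (i+d+1))]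
    rw [mul_assoc, Ring.inverse_mul_cancel _ (hu (i+d+1)), mul_one, add_neg_cancel]
  · subst h
    rw [Finset.Icc_self, Finset.sum_singleton, if_pos rfl]
    have h1 : Wmat U i i = Ring.inverse (U i i) := by
      simp [Wmat, Wd]
    rw [h1, Ring.inverse_mul_cancel _ (hu i)]
  · rw [Finset.Icc_eq_empty (by omega), Finset.sum_empty, if_neg (by omega)]

lemma Vmat_utMul (htri : ∀ i j, j < i → U i j = 0) (hu : ∀ i, IsUnit (U i i)) :
    utMul (Vmat U) U = idMat := by
  have hUV := utMul_Vmat U htri hu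
  have hWU := Wmat_utMul U hu
  have hVW : Wmat U = Vmat U := by
    calc Wmat U = utMul (Wmat U) idMat := (utMul_id _ (Wmat_tri U)).symm
    _ = utMul (Wmat U) (utMul U (Vmat U)) := by rw [hUV]
    _ = utMul (utMul (Wmat U) U) (Vmat U) := (utMul_assoc _ _ _).symm
    _ = utMul idMat (Vmat U) := by rw [hWU]
    _ = Vmat U := id_utMul _ (Vmat_tri U)
  rw [← hVW]; exact hWU

end Inv

/-- for `C` upper triangular with `C_{i,i} = q̂^i`, `C_{i,i+1} = 1`, the
recursively defined matrix `U` (first row `(1,0,0,…)`, and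
`U_{i+1,j} = (∑_{s=i}^{j−2} U_{i,s} c_{s,j}) + U_{i,j−1} + (q̂^j − q̂^i) U_{i,j}`)
is upper triangular with unit diagonal entries, hence invertible, and `UC = RU`,
so `UCU⁻¹ = R`. -/
theorem stmt13 (p : ℕ) [Fact p.Prime] (hodd : Odd p) (qh : ℤ_[p])
    (hqh : ∃ y : ℤ_[p], qh = 1 + p * y)
    (Cm : ℕ → ℕ → ℤ_[p]) (hCtri : ∀ i j, j < i → Cm i j = 0)
    (hCd : ∀ i, Cm i i = qh ^ i) (hCs : ∀ i, Cm i (i + 1) = 1)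
    (U : ℕ → ℕ → ℤ_[p]) (hU00 : U 0 0 = 1) (hU0 : ∀ j, 0 < j → U 0 j = 0)
    (hUrec : ∀ i j, 1 ≤ j → U (i + 1) j =
      (∑ s ∈ Finset.Ico i (j - 1), U i s * Cm s j) + U i (j - 1) +
        (qh ^ j - qh ^ i) * U i j)
    (hUrec0 : ∀ i, U (i + 1) 0 = (1 - qh ^ i) * U i 0) :
    (∀ i j, j < i → U i j = 0) ∧
    (∀ i, IsUnit (U i i)) ∧
    utMul U Cm = utMul (Rmat qh) U ∧
    ∃ V : ℕ → ℕ → ℤ_[p],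
      utMul U V = idMat ∧ utMul V U = idMat ∧ utMul (utMul U Cm) V = Rmat qh := by
  obtain ⟨y, hy⟩ := hqh
  have hRd : ∀ i, Rmat (qh:ℤ_[p]) i i = qh^i := fun i => by simp [Rmat]
  have hRs : ∀ i, Rmat (qh:ℤ_[p]) i (i+1) = 1 := fun i => by
    simp [Rmat, Nat.ne_of_lt (Nat.lt_succ_self i)]
  have hR0 : ∀ i k, k ≠ i → k ≠ i+1 → Rmat (qh:ℤ_[p]) i k = 0 := fun i k h1 h2 => by
    simp [Rmat, Ne.symm h1, h2]
  have hRtri : ∀ i j, j < i → Rmat (qh:ℤ_[p]) i j = 0 := fun i j h =>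
    hR0 i j (by omega) (by omega)
  -- triangularity of U
  have hUtri : ∀ i j, j < i → U i j = 0 := by
    intro i
    induction i with
    | zero => intro j h; omega
    | succ i ih =>
      intro j hj
      rcases Nat.eq_zero_or_pos j with rfl | hj1
      · rw [hUrec0]
        rcases Nat.eq_zero_or_pos i with rfl | hi
        · simp
        · rw [ih 0 hi, mul_zero]
      · rw [hUrec i j hj1]
        rw [Finset.Ico_eq_empty (by omega), Finset.sum_empty, ih (j-1) (by omega)]
        rcases Nat.lt_or_ge j i with h2 | h2
        · rw [ih j h2]; ring
        · have hji : j = i := by omega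
          subst hji; simp
  -- diagonal entries
  have hdiag : ∀ i, ∃ z : ℤ_[p], U i i = 1 + p * z := by
    intro i
    induction i with
    | zero => exact ⟨0, by simp [hU00]⟩
    | succ i ih =>
      obtain ⟨z, hz⟩ := ih
      have hr := hUrec i (i+1) (by omega)
      simp only [Nat.add_sub_cancel] at hr
      rw [Finset.Ico_self, Finset.sum_empty, zero_add] at hr
      refine ⟨z + y * qh^i * U i (i+1), ?_⟩
      have hq : qh^(i+1) - qh^i = p * (y * qh^i) := by
        have h0 : qh - 1 = p * y := by rw [hy]; ring
        calc qh^(i+1) - qh^i = qh^i * (qh - 1) := by ring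
        _ = p * (y * qh^i) := by rw [h0]; ring
      rw [hr, hz, hq]; ring
  have hunit : ∀ i, IsUnit (U i i) := by
    intro i
    obtain ⟨z, hz⟩ := hdiag i
    rw [hz]
    by_contra hcon
    have hle := PadicInt.norm_le_one (1 + (p:ℤ_[p])*z)
    have hne : ‖(1+p*z : ℤ_[p])‖ ≠ 1 := fun h => hcon (PadicInt.isUnit_iff.2 h)
    have hlt : ‖(1+p*z:ℤ_[p])‖ < 1 := lt_of_le_of_ne hle hne
    have hdvd : (p:ℤ_[p]) ∣ 1 + p*z := (PadicInt.norm_lt_one_iff_dvd _).1 hlt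
    have hpz : (p:ℤ_[p]) ∣ (p:ℤ_[p]) * z := Dvd.intro z rfl
    have hdvd1 : (p:ℤ_[p]) ∣ 1 := (dvd_add_left hpz).1 hdvd
    have h2 : ‖(p:ℤ_[p])‖ = 1 := PadicInt.isUnit_iff.1 (isUnit_of_dvd_one hdvd1)
    have hp2 : 2 ≤ p := (Fact.out : p.Prime).two_le
    have h3 : ‖(p:ℤ_[p])‖ < 1 := by
      rw [PadicInt.norm_p]
      rw [inv_lt_one_iff₀]
      right
      exact_mod_cast by omega
    linarith
  -- UC = RU
  have hmain : utMul U Cm = utMul (Rmat qh) U := by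
    funext i j
    show (∑ k ∈ Finset.Icc i j, U i k * Cm k j) =
      ∑ k ∈ Finset.Icc i j, Rmat qh i k * U k j
    rcases lt_trichotomy i j with h | h | h
    · obtain ⟨m, rfl⟩ : ∃ m, j = m + 1 := ⟨j-1, by omega⟩
      have him : i ≤ m := by omega
      have hR : ∑ k ∈ Finset.Icc i (m+1), Rmat qh i k * U k (m+1)
          = qh^i * U i (m+1) + U (i+1) (m+1) := by
        have hsplit : Finset.Icc i (m+1) =
            insert i (insert (i+1) (Finset.Icc (i+2) (m+1))) := by
          ext x; simp only [Finset.mem_Icc, Finset.mem_insert]; omega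
        rw [hsplit,
          Finset.sum_insert (by simp only [Finset.mem_insert, Finset.mem_Icc]; omega),
          Finset.sum_insert (by simp only [Finset.mem_Icc]; omega)]
        rw [hRd, hRs, Finset.sum_eq_zero (fun k hk => by
          simp only [Finset.mem_Icc] at hk
          rw [hR0 i k (by omega) (by omega), zero_mul])]
        ring
      have hL : ∑ k ∈ Finset.Icc i (m+1), U i k * Cm k (m+1)
          = (∑ s ∈ Finset.Ico i m, U i s * Cm s (m+1)) + U i m + qh^(m+1) * U i (m+1) := by
        rw [Finset.sum_Icc_succ_top (by omega : i ≤ m + 1), ← Finset.Ico_add_one_right_eq_Icc,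
          Finset.sum_Ico_succ_top him, hCs m, hCd (m+1), mul_one]
        ring
      rw [hL, hR, hUrec i (m+1) (by omega)]
      simp only [Nat.add_sub_cancel]
      ring
    · subst h
      rw [Finset.Icc_self, Finset.sum_singleton, Finset.sum_singleton, hCd, hRd]
      ring
    · rw [Finset.Icc_eq_empty (by omega), Finset.sum_empty, Finset.sum_empty]
  refine ⟨hUtri, hunit, hmain, Vmat U, utMul_Vmat U hUtri hunit,
    Vmat_utMul U hUtri hunit, ?_⟩
  rw [hmain, utMul_assoc, utMul_Vmat U hUtri hunit, utMul_id _ hRtri]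
end

section
/- Define g_{m,l} = u^i (u/p)^j f_l ∈ ℚ_p[u,v] for m ≥ l, where (i,j) = (0, m−l) if m ≤ ν_p(l!) + l and (i,j) = (m−l−ν_p(l!), ν_p(l!)) if m > ν_p(l!) + l. Then for n ≤ m: u^(m−n) g_{n,i} = p^(m−n) g_{m,i} if n ≤ m ≤ ν_p(i!)+i; u^(m−n) g_{n,i} = p^(ν_p(i!)−n+i) g_{m,i} if n ≤ ν_p(i!)+i < m; and u^(m−n) g_{n,i} = g_{m,i} if ν_p(i!)+i < n ≤ m. -/
open MvPolynomial

/-- `g_{m,l} = (u/p)^(m−l) f_l` if `m ≤ ν_p(l!)+l` and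
`g_{m,l} = u^(m−l−ν_p(l!)) (u/p)^(ν_p(l!)) f_l` otherwise. -/
noncomputable def gpoly (p : ℕ) [Fact p.Prime] (q : ℤ) (m l : ℕ) :
    MvPolynomial (Fin 2) ℚ_[p] :=
  if m ≤ padicValNat p (Nat.factorial l) + l then
    (C ((p : ℚ_[p])⁻¹) * X 0) ^ (m - l) * fpoly p q l
  else
    (X 0) ^ (m - l - padicValNat p (Nat.factorial l)) *
      (C ((p : ℚ_[p])⁻¹) * X 0) ^ (padicValNat p (Nat.factorial l)) * fpoly p q l

/-- for `i ≤ n ≤ m`,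
`u^(m−n) g_{n,i} = p^(m−n) g_{m,i}` if `n ≤ m ≤ ν_p(i!)+i`;
`u^(m−n) g_{n,i} = p^(ν_p(i!)−n+i) g_{m,i}` if `n ≤ ν_p(i!)+i < m`; and
`u^(m−n) g_{n,i} = g_{m,i}` if `ν_p(i!)+i < n ≤ m`. -/
theorem stmt16 (p : ℕ) [Fact p.Prime] (hodd : Odd p) (q : ℤ)
    (hq : orderOf ((q : ZMod (p ^ 2))) = p * (p - 1))
    (i n m : ℕ) (hin : i ≤ n) (hnm : n ≤ m) :
    (m ≤ padicValNat p (Nat.factorial i) + i →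
      (X 0) ^ (m - n) * gpoly p q n i =
        C ((p : ℚ_[p]) ^ (m - n)) * gpoly p q m i) ∧
    (n ≤ padicValNat p (Nat.factorial i) + i →
      padicValNat p (Nat.factorial i) + i < m →
      (X 0) ^ (m - n) * gpoly p q n i =
        C ((p : ℚ_[p]) ^ (padicValNat p (Nat.factorial i) + i - n)) * gpoly p q m i) ∧
    (padicValNat p (Nat.factorial i) + i < n →
      (X 0) ^ (m - n) * gpoly p q n i = gpoly p q m i) := by
  have hp : ((p : ℚ_[p]) : ℚ_[p]) ≠ 0 := by
    exact_mod_cast Nat.cast_ne_zero.mpr (Fact.out : p.Prime).ne_zero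
  set V := padicValNat p (Nat.factorial i) with hV
  have key2 : ∀ k : ℕ, (X 0 : MvPolynomial (Fin 2) ℚ_[p]) ^ k =
      C ((p : ℚ_[p]) ^ k) * (C ((p : ℚ_[p])⁻¹) * X 0) ^ k := by
    intro k
    rw [map_pow, ← mul_pow]
    congr 1
    rw [← mul_assoc, ← map_mul, mul_inv_cancel₀ hp, map_one, one_mul]
  refine ⟨?_, ?_, ?_⟩
  · intro hm
    have hn : n ≤ V + i := le_trans hnm hm
    rw [gpoly, gpoly, if_pos hn, if_pos hm,
      show m - i = (m - n) + (n - i) by omega, key2 (m - n)]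
    ring
  · intro hn hm
    rw [gpoly, gpoly, if_pos hn, if_neg (by omega), ← hV,
      show m - n = (m - i - V) + (V + i - n) by omega,
      pow_add ((X 0 : MvPolynomial (Fin 2) ℚ_[p])) (m - i - V), key2 (V + i - n)]
    have hVsplit : (C ((p : ℚ_[p])⁻¹) * X 0 : MvPolynomial (Fin 2) ℚ_[p]) ^ V =
        (C ((p : ℚ_[p])⁻¹) * X 0) ^ (V + i - n) * (C ((p : ℚ_[p])⁻¹) * X 0) ^ (n - i) := by
      rw [← pow_add]; congr 1; omega
    rw [hVsplit]
    ring
  · intro hn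
    rw [gpoly, gpoly, if_neg (by omega), if_neg (by omega),
      show m - i - V = (m - n) + (n - i - V) by omega]
    ring
end

section
/- Let the map Ψ on ℚ_p[u,v] fix u and send v to q̂v, and define g_{m,n} as above. Then for m > n ≥ 1: Ψ(g_{m,n}) = q̂^n g_{m,n} + g_{m,n−1} if m > ν_p(n!) + n; Ψ(g_{m,n}) = q̂^n g_{m,n} + p^(ν_p(n!)+n−m) g_{m,n−1} if ν_p((n−1)!) + n − 1 < m ≤ ν_p(n!) + n; and Ψ(g_{m,n}) = q̂^n g_{m,n} + p^(ν_p(n)+1) g_{m,n−1} if m ≤ ν_p((n−1)!) + n − 1. -/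
open MvPolynomial

-- auxiliary defs
noncomputable def Dscal (p : ℕ) [Fact p.Prime] (q : ℤ) (k : ℕ) : ℚ_[p] :=
  ∏ i ∈ Finset.range k, (((q : ℚ_[p]) ^ (p - 1)) ^ k - ((q : ℚ_[p]) ^ (p - 1)) ^ i)

noncomputable def Ppoly (p : ℕ) [Fact p.Prime] (q : ℤ) (k : ℕ) :
    MvPolynomial (Fin 2) ℚ_[p] :=
  ∏ i ∈ Finset.range k, (X 1 - C (((q : ℚ_[p]) ^ (p - 1)) ^ i) * X 0)

lemma cpoly_eq (p : ℕ) [Fact p.Prime] (q : ℤ) (k : ℕ) :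
    cpoly p q k = C ((Dscal p q k)⁻¹) * Ppoly p q k := by
  rw [cpoly, Dscal, Ppoly, Finset.prod_mul_distrib, ← Finset.prod_inv_distrib, map_prod]

lemma qcast_ne_zero (p : ℕ) [Fact p.Prime] (q : ℤ)
    (hq : orderOf ((q : ZMod (p ^ 2))) = p * (p - 1)) : (q : ℚ_[p]) ≠ 0 := by
  have hp := (Fact.out : p.Prime)
  intro h
  have hq0 : q = 0 := by exact_mod_cast h
  subst hq0
  simp only [Int.cast_zero] at hq
  have h1 : (0 : ZMod (p^2)) ^ (p * (p-1)) = 1 := by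
    rw [← hq]; exact pow_orderOf_eq_one _
  have hpos : 0 < p * (p - 1) := by
    have := hp.two_le; exact Nat.mul_pos (by omega) (by omega)
  rw [zero_pow hpos.ne'] at h1
  have : (1 : ℕ) < p ^ 2 := by nlinarith [hp.two_le]
  haveI : Fact (1 < p ^ 2) := ⟨this⟩
  exact zero_ne_one h1

lemma Qpow_ne_one (p : ℕ) [Fact p.Prime] (hodd : Odd p) (q : ℤ)
    (hq : orderOf ((q : ZMod (p ^ 2))) = p * (p - 1)) (j : ℕ) (hj : 0 < j) :
    (((q : ℚ_[p]) ^ (p - 1)) ^ j) ≠ 1 := by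
  have hp := (Fact.out : p.Prime)
  have hp3 : 3 ≤ p := by
    have h2 := hp.two_le
    rcases Nat.lt_or_ge p 3 with h | h
    · interval_cases p
      · exact absurd hodd (by decide)
    · exact h
  intro h
  have hZ : (q : ℚ_[p]) ^ ((p - 1) * j) = 1 := by rw [pow_mul]; exact h
  have hZ' : ((q ^ ((p-1)*j) : ℤ) : ℚ_[p]) = ((1 : ℤ) : ℚ_[p]) := by push_cast; exact_mod_cast hZ
  have hint : q ^ ((p-1)*j) = 1 := by exact_mod_cast hZ'
  have habs : q = 1 ∨ q = -1 := by
    have h1 : q.natAbs ^ ((p-1)*j) = 1 := by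
      have := congrArg Int.natAbs hint
      rwa [Int.natAbs_pow] at this
    have h2 : q.natAbs = 1 := by
      have hjpos : (p-1)*j ≠ 0 := Nat.mul_ne_zero (by omega) (by omega)
      exact (pow_eq_one_iff.mp h1).resolve_right hjpos
    rcases Int.natAbs_eq q with h | h <;> omega
  have hord : orderOf ((q : ZMod (p ^ 2))) ∣ 2 := by
    rcases habs with rfl | rfl
    · simp
    · apply orderOf_dvd_of_pow_eq_one; push_cast; ring
  rw [hq] at hord
  have h1 := Nat.le_of_dvd (by norm_num) hord
  have h2 := Nat.mul_le_mul hp3 (show 2 ≤ p - 1 by omega)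
  omega


section Rec
variable (p : ℕ) [Fact p.Prime] (q : ℤ)

local notation "Q" => ((q : ℚ_[p]) ^ (p - 1))

lemma Psi_X0 : PsiMap p q (X 0) = X 0 := by simp [PsiMap]

lemma Psi_X1 : PsiMap p q (X 1) = C Q * X 1 := by simp [PsiMap]

lemma Psi_P (k : ℕ) :
    PsiMap p q (Ppoly p q (k+1)) =
      C (Q ^ (k+1)) * Ppoly p q (k+1) +
        C (Q ^ k * (Q ^ (k+1) - 1)) * X 0 * Ppoly p q k := by
  have hfac : ∀ i : ℕ, PsiMap p q (X 1 - C (Q ^ i) * X 0)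
      = C Q * X 1 - C (Q ^ i) * X 0 := by
    intro i
    simp [PsiMap]
  rw [Ppoly, map_prod]
  simp only [hfac]
  rw [Finset.prod_range_succ']
  have hshift : ∀ i : ℕ, C Q * X 1 - C (Q ^ (i+1)) * (X 0 : MvPolynomial (Fin 2) ℚ_[p])
      = C Q * (X 1 - C (Q ^ i) * X 0) := by
    intro i
    rw [pow_succ']
    simp only [map_mul]
    ring
  simp only [hshift]
  rw [Finset.prod_mul_distrib, Finset.prod_const, Finset.card_range, ← Ppoly]
  rw [Ppoly, Finset.prod_range_succ, ← Ppoly]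
  simp only [pow_zero, map_one, one_mul, map_mul, map_sub, map_pow, C_pow]
  ring

lemma Dscal_succ (k : ℕ) :
    Dscal p q (k+1) = (Q ^ (k+1) - 1) * Q ^ k * Dscal p q k := by
  rw [Dscal, Finset.prod_range_succ']
  have hshift : ∀ i : ℕ, Q ^ (k+1) - Q ^ (i+1) = Q * (Q ^ k - Q ^ i) := by
    intro i
    rw [pow_succ', pow_succ']
    ring
  simp only [hshift]
  rw [Finset.prod_mul_distrib, Finset.prod_const, Finset.card_range, ← Dscal]
  ring

lemma Psi_c (hodd : Odd p) (hq : orderOf ((q : ZMod (p ^ 2))) = p * (p - 1)) (k : ℕ) :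
    PsiMap p q (cpoly p q (k+1)) =
      C (Q ^ (k+1)) * cpoly p q (k+1) + X 0 * cpoly p q k := by
  have hQ0 : Q ≠ 0 := pow_ne_zero _ (qcast_ne_zero p q hq)
  have hQ1 : Q ^ (k+1) - 1 ≠ 0 := sub_ne_zero.mpr (Qpow_ne_one p hodd q hq (k+1) k.succ_pos)
  have hscal : (Dscal p q (k+1))⁻¹ * (Q ^ k * (Q ^ (k+1) - 1)) = (Dscal p q k)⁻¹ := by
    rw [Dscal_succ, mul_inv, mul_inv]
    have h1 := mul_inv_cancel₀ hQ1
    have h2 := mul_inv_cancel₀ (pow_ne_zero k hQ0)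
    linear_combination (Dscal p q k)⁻¹ * (Q ^ (k+1) - 1)⁻¹ * (Q ^ (k+1) - 1) * h2 +
      (Dscal p q k)⁻¹ * h1
  have hC : ∀ a : ℚ_[p], PsiMap p q (C a) = C a := by
    intro a; simp [PsiMap, algebraMap_eq]
  simp only [cpoly_eq, map_mul, hC, Psi_P]
  rw [← hscal]
  simp only [map_mul]
  ring

lemma Psi_f (hodd : Odd p) (hq : orderOf ((q : ZMod (p ^ 2))) = p * (p - 1)) (k : ℕ) :
    PsiMap p q (fpoly p q (k+1)) =
      C (Q ^ (k+1)) * fpoly p q (k+1) +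
        C ((p : ℚ_[p]) ^ (padicValNat p (k+1))) * X 0 * fpoly p q k := by
  have hC : ∀ a : ℚ_[p], PsiMap p q (C a) = C a := by
    intro a; simp [PsiMap, algebraMap_eq]
  have hval : padicValNat p (Nat.factorial (k+1)) =
      padicValNat p (k+1) + padicValNat p (Nat.factorial k) := by
    rw [Nat.factorial_succ, padicValNat.mul k.succ_ne_zero (Nat.factorial_ne_zero k)]
  simp only [fpoly, map_mul, hC, Psi_c p q hodd hq, hval, pow_add]
  ring

lemma gpoly_eq (m l : ℕ) :
    gpoly p q m l =
      C (((p : ℚ_[p])⁻¹) ^ min (m - l) (padicValNat p (Nat.factorial l))) *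
        X 0 ^ (m - l) * fpoly p q l := by
  rw [gpoly]
  split_ifs with h
  · have hmin : min (m - l) (padicValNat p (Nat.factorial l)) = m - l := by omega
    rw [hmin, mul_pow, C_pow]
  · have hmin : min (m - l) (padicValNat p (Nat.factorial l))
        = padicValNat p (Nat.factorial l) := by omega
    have hsplit : m - l = (m - l - padicValNat p (Nat.factorial l))
        + padicValNat p (Nat.factorial l) := by omega
    rw [hmin, mul_pow, C_pow, hsplit, pow_add, Nat.add_sub_cancel]
    ring

end Rec


/-- for `m > n ≥ 1`:
`Ψ(g_{m,n}) = q̂^n g_{m,n} + g_{m,n−1}` if `m > ν_p(n!)+n`;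
`Ψ(g_{m,n}) = q̂^n g_{m,n} + p^(ν_p(n!)+n−m) g_{m,n−1}` if `ν_p((n−1)!)+n−1 < m ≤ ν_p(n!)+n`;
`Ψ(g_{m,n}) = q̂^n g_{m,n} + p^(ν_p(n)+1) g_{m,n−1}` if `m ≤ ν_p((n−1)!)+n−1`. -/
theorem stmt18 (p : ℕ) [Fact p.Prime] (hodd : Odd p) (q : ℤ)
    (hq : orderOf ((q : ZMod (p ^ 2))) = p * (p - 1))
    (m n : ℕ) (hn : 1 ≤ n) (hmn : n < m) :
    (padicValNat p (Nat.factorial n) + n < m →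
      PsiMap p q (gpoly p q m n) =
        C (((q : ℚ_[p]) ^ (p - 1)) ^ n) * gpoly p q m n + gpoly p q m (n - 1)) ∧
    (padicValNat p (Nat.factorial (n - 1)) + (n - 1) < m →
      m ≤ padicValNat p (Nat.factorial n) + n →
      PsiMap p q (gpoly p q m n) =
        C (((q : ℚ_[p]) ^ (p - 1)) ^ n) * gpoly p q m n +
          C ((p : ℚ_[p]) ^ (padicValNat p (Nat.factorial n) + n - m)) *
            gpoly p q m (n - 1)) ∧
    (m ≤ padicValNat p (Nat.factorial (n - 1)) + (n - 1) →
      PsiMap p q (gpoly p q m n) =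
        C (((q : ℚ_[p]) ^ (p - 1)) ^ n) * gpoly p q m n +
          C ((p : ℚ_[p]) ^ (padicValNat p n + 1)) * gpoly p q m (n - 1)) := by
  obtain ⟨k, rfl⟩ : ∃ k, n = k + 1 := ⟨n - 1, by omega⟩
  simp only [Nat.add_sub_cancel]
  have hpne : (p : ℚ_[p]) ≠ 0 := by
    exact_mod_cast Nat.cast_ne_zero.mpr (Fact.out : p.Prime).ne_zero
  have hC : ∀ a : ℚ_[p], PsiMap p q (C a) = C a := by
    intro a; simp [PsiMap, algebraMap_eq]
  have hval : padicValNat p (Nat.factorial (k+1)) =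
      padicValNat p (k+1) + padicValNat p (Nat.factorial k) := by
    rw [Nat.factorial_succ, padicValNat.mul k.succ_ne_zero (Nat.factorial_ne_zero k)]
  set ν := padicValNat p (Nat.factorial (k+1)) with hν
  set ν' := padicValNat p (Nat.factorial k) with hν'
  set δ := padicValNat p (k+1) with hδ
  have hscal : ∀ a b c d : ℕ, d + b = c + a →
      ((p : ℚ_[p])⁻¹) ^ a * (p : ℚ_[p]) ^ d = (p : ℚ_[p]) ^ c * ((p : ℚ_[p])⁻¹) ^ b := by
    intro a b c d h
    field_simp
    rw [one_div, inv_pow, inv_pow, inv_mul_eq_iff_eq_mul₀ (pow_ne_zero _ hpne), ← mul_assoc,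
      eq_mul_inv_iff_mul_eq₀ (pow_ne_zero _ hpne), ← pow_add, ← pow_add, h]
    ring
  have key : PsiMap p q (gpoly p q m (k+1)) =
      C (((q : ℚ_[p]) ^ (p - 1)) ^ (k+1)) * gpoly p q m (k+1) +
        C (((p : ℚ_[p])⁻¹) ^ (min (m - (k+1)) ν) * (p : ℚ_[p]) ^ δ) *
          X 0 ^ (m - (k+1) + 1) * fpoly p q k := by
    rw [gpoly_eq]
    simp only [map_mul, map_pow, hC, Psi_X0, Psi_f p q hodd hq k]
    ring
  have e1 : m - (k+1) + 1 = m - k := by omega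
  refine ⟨?_, ?_, ?_⟩
  · intro h
    rw [key, gpoly_eq p q m k]
    have ha : min (m - (k+1)) ν = ν := by omega
    have hb : min (m - k) ν' = ν' := by omega
    rw [e1, ha, hb, hscal ν ν' 0 δ (by omega)]
    simp only [pow_zero, one_mul]
  · intro h1 h2
    rw [key, gpoly_eq p q m k]
    have ha : min (m - (k+1)) ν = m - (k+1) := by omega
    have hb : min (m - k) ν' = ν' := by omega
    rw [e1, ha, hb, hscal (m - (k+1)) ν' (ν + (k+1) - m) δ (by omega)]
    simp only [map_mul]
    ring
  · intro h
    rw [key, gpoly_eq p q m k]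
    have ha : min (m - (k+1)) ν = m - (k+1) := by omega
    have hb : min (m - k) ν' = m - k := by omega
    rw [e1, ha, hb, hscal (m - (k+1)) (m - k) (δ + 1) δ (by omega)]
    simp only [map_mul]
    ring
end
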